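/- arXiv:2311.06982 — 9 statements merged into one kernel-verified Lean document; each statement's English description precedes it below -/
import Mathlib

section
/- Let Φ be an N×N real symmetric positive definite matrix and let K be an N×N real symmetric matrix. Then M = K·Φ⁻¹ admits a diagonalization M = V·D·V⁻¹ with D a real diagonal matrix and V an invertible real matrix satisfying cond(V) ≤ cond(Φ^{1/2}), where Φ^{1/2} is the symmetric positive definite square root of Φ. -/
open Matrix
open scoped Matrix.Norms.L2Operator

set_option maxHeartbeats 1000000 in
/-- If `Φ` is symmetric positive definite and `K` symmetric, then
`M = K·Φ⁻¹` admits a diagonalization `M = V·D·V⁻¹` with `D` real diagonal and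
`cond(V) ≤ cond(Φ^{1/2})`, where `Φ^{1/2}` is the symmetric positive definite
square root of `Φ` (here represented by any `S` with `S.PosDef` and `S * S = Φ`). -/
theorem stmt2 {N : ℕ} (Φ K : Matrix (Fin N) (Fin N) ℝ)
    (hΦ : Φ.PosDef) (hK : K.IsHermitian)
    (S : Matrix (Fin N) (Fin N) ℝ) (hS : S.PosDef) (hSsq : S * S = Φ) :
    ∃ (V : Matrix (Fin N) (Fin N) ℝ) (d : Fin N → ℝ),
      IsUnit V ∧
      K * Φ⁻¹ = V * Matrix.diagonal d * V⁻¹ ∧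
      ‖V‖ * ‖V⁻¹‖ ≤ ‖S‖ * ‖S⁻¹‖ := by
  have hSdet : IsUnit S.det := isUnit_iff_ne_zero.mpr hS.det_pos.ne'
  have hSu : IsUnit S := (Matrix.isUnit_iff_isUnit_det S).mpr hSdet
  have hSH : S.IsHermitian := hS.isHermitian
  have hSinvH : S⁻¹.IsHermitian := hSH.inv
  set A : Matrix (Fin N) (Fin N) ℝ := S⁻¹ * K * S⁻¹ with hAdef
  have hA : A.IsHermitian := by
    unfold A
    unfold Matrix.IsHermitian
    rw [conjTranspose_mul, conjTranspose_mul, hSinvH.eq, hK.eq, mul_assoc]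
  set U : Matrix (Fin N) (Fin N) ℝ := (hA.eigenvectorUnitary : Matrix (Fin N) (Fin N) ℝ)
    with hUdef
  have hUmem : U ∈ unitary (Matrix (Fin N) (Fin N) ℝ) := hA.eigenvectorUnitary.2
  have hUstar : star U * U = 1 := Unitary.star_mul_self_of_mem hUmem
  have hUinv : U⁻¹ = star U := Matrix.inv_eq_left_inv hUstar
  have hUu : IsUnit U := ⟨Unitary.toUnits ⟨U, hUmem⟩, rfl⟩
  refine ⟨S * U, hA.eigenvalues, hSu.mul hUu, ?_, ?_⟩
  · have hspec : A = U * Matrix.diagonal hA.eigenvalues * star U := by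
      have := hA.spectral_theorem
      simpa using this
    have hΦinv : Φ⁻¹ = S⁻¹ * S⁻¹ := by rw [← hSsq, Matrix.mul_inv_rev]
    have hVinv : (S * U)⁻¹ = star U * S⁻¹ := by rw [Matrix.mul_inv_rev, hUinv]
    rw [hΦinv, hVinv]
    have h1 : K * (S⁻¹ * S⁻¹) = S * A * S⁻¹ := by
      rw [hAdef]
      simp only [mul_assoc]
      rw [Matrix.mul_nonsing_inv_cancel_left _ _ hSdet]
    have h2 : S * (U * Matrix.diagonal hA.eigenvalues * star U) * S⁻¹
        = S * U * Matrix.diagonal hA.eigenvalues * (star U * S⁻¹) := by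
      simp only [mul_assoc]
    rw [h1, ← h2, ← hspec]
  · have h1 : ‖S * U‖ = ‖S‖ := CStarRing.norm_mul_mem_unitary S hUmem
    have h2 : ‖(S * U)⁻¹‖ = ‖S⁻¹‖ := by
      rw [Matrix.mul_inv_rev, hUinv]
      exact CStarRing.norm_mem_unitary_mul _ (Unitary.star_mem hUmem)
    rw [h1, h2]
end

section
/- (Matrix form of Proposition 3.1.) Let Φ be an N×N real symmetric positive definite matrix, let K be an N×N real symmetric matrix, and set M = K·Φ⁻¹. Then for every N×N real matrix Mᵉ and every complex eigenvalue λᵉ of Mᵉ, there exists a (real) eigenvalue λ of M such that |λ − λᵉ| ≤ cond(Φ^{1/2})·‖M − Mᵉ‖, where Φ^{1/2} is the symmetric positive definite square root of Φ. -/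
open Matrix
open scoped Matrix.Norms.L2Operator

/-- The multiset of complex eigenvalues (roots of the characteristic polynomial over `ℂ`)
of a real square matrix. -/
noncomputable def specC {n : ℕ} (A : Matrix (Fin n) (Fin n) ℝ) : Multiset ℂ :=
  ((A.map (algebraMap ℝ ℂ)).charpoly).roots

namespace BFaux

/-- Euclidean norm of a plain vector. -/
noncomputable def enorm {n : ℕ} {𝕜 : Type*} [RCLike 𝕜] (x : Fin n → 𝕜) : ℝ :=
  ‖(EuclideanSpace.equiv (Fin n) 𝕜).symm x‖

variable {n : ℕ} {𝕜 : Type*} [RCLike 𝕜]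

lemma enorm_eq (x : Fin n → 𝕜) : enorm x = √(∑ i, ‖x i‖ ^ 2) := by
  rw [enorm, EuclideanSpace.norm_eq]; rfl

lemma enorm_nonneg (x : Fin n → 𝕜) : 0 ≤ enorm x := norm_nonneg _

lemma enorm_sq (x : Fin n → 𝕜) : enorm x ^ 2 = ∑ i, ‖x i‖ ^ 2 := by
  rw [enorm_eq, Real.sq_sqrt]; positivity

lemma enorm_pos (x : Fin n → 𝕜) (hx : x ≠ 0) : 0 < enorm x := by
  rw [enorm, norm_pos_iff]
  intro h
  exact hx (by simpa using congrArg (EuclideanSpace.equiv (Fin n) 𝕜) h)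

lemma enorm_mulVec_le (A : Matrix (Fin n) (Fin n) 𝕜) (x : Fin n → 𝕜) :
    enorm (A *ᵥ x) ≤ ‖A‖ * enorm x :=
  A.l2_opNorm_mulVec ((EuclideanSpace.equiv (Fin n) 𝕜).symm x)

lemma le_of_sq_le_sq {a b : ℝ} (ha : 0 ≤ a) (hb : 0 ≤ b) (h : a ^ 2 ≤ b ^ 2) : a ≤ b := by
  have := Real.sqrt_le_sqrt h
  rwa [Real.sqrt_sq ha, Real.sqrt_sq hb] at this

/-- Unitary matrices preserve the Euclidean norm. -/
lemma enorm_unitary_mulVec (hn : 0 < n) (U : Matrix.unitaryGroup (Fin n) ℂ) (x : Fin n → ℂ) :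
    enorm ((U : Matrix (Fin n) (Fin n) ℂ) *ᵥ x) = enorm x := by
  haveI : Nonempty (Fin n) := Fin.pos_iff_nonempty.mp hn
  haveI : Nontrivial (Matrix (Fin n) (Fin n) ℂ) := by infer_instance
  have hU : ‖(U : Matrix (Fin n) (Fin n) ℂ)‖ = 1 := CStarRing.norm_coe_unitary U
  have h1 : enorm ((U : Matrix (Fin n) (Fin n) ℂ) *ᵥ x) ≤ enorm x := by
    have := enorm_mulVec_le (U : Matrix (Fin n) (Fin n) ℂ) x
    rwa [hU, one_mul] at this
  have h2 : enorm x ≤ enorm ((U : Matrix (Fin n) (Fin n) ℂ) *ᵥ x) := by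
    have hx : x = (star (U : Matrix (Fin n) (Fin n) ℂ)) *ᵥ ((U : Matrix (Fin n) (Fin n) ℂ) *ᵥ x) := by
      rw [mulVec_mulVec, Unitary.coe_star_mul_self, one_mulVec]
    have hUstar : ‖star (U : Matrix (Fin n) (Fin n) ℂ)‖ = 1 := by
      rw [← Unitary.coe_star]; exact CStarRing.norm_coe_unitary (star U)
    calc enorm x = enorm ((star (U : Matrix (Fin n) (Fin n) ℂ)) *ᵥ
          ((U : Matrix (Fin n) (Fin n) ℂ) *ᵥ x)) := by rw [← hx]
      _ ≤ ‖star (U : Matrix (Fin n) (Fin n) ℂ)‖ * enorm ((U : Matrix (Fin n) (Fin n) ℂ) *ᵥ x) :=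
          enorm_mulVec_le _ _
      _ = enorm ((U : Matrix (Fin n) (Fin n) ℂ) *ᵥ x) := by rw [hUstar, one_mul]
  exact le_antisymm h1 h2

lemma le_enorm_diagonal_mulVec (d : Fin n → ℂ) {δ : ℝ} (hδ : 0 ≤ δ)
    (hd : ∀ i, δ ≤ ‖d i‖) (w : Fin n → ℂ) :
    δ * enorm w ≤ enorm (Matrix.diagonal d *ᵥ w) := by
  apply le_of_sq_le_sq (mul_nonneg hδ (enorm_nonneg _)) (enorm_nonneg _)
  rw [mul_pow, enorm_sq, enorm_sq, Finset.mul_sum]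
  apply Finset.sum_le_sum
  intro i _
  have : (Matrix.diagonal d *ᵥ w) i = d i * w i := Matrix.mulVec_diagonal d w i
  rw [this, norm_mul, mul_pow]
  have h1 : δ ^ 2 ≤ ‖d i‖ ^ 2 := by
    apply pow_le_pow_left₀ hδ (hd i)
  exact mul_le_mul_of_nonneg_right h1 (by positivity)

/-- Complexification bound: for a real matrix `C` and complex vector `v`. -/
lemma enorm_map_mulVec_le (C : Matrix (Fin n) (Fin n) ℝ) (v : Fin n → ℂ) :
    enorm ((C.map (algebraMap ℝ ℂ)) *ᵥ v) ≤ ‖C‖ * enorm v := by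
  set vr : Fin n → ℝ := fun i => (v i).re with hvr
  set vi : Fin n → ℝ := fun i => (v i).im with hvi
  have hre : ∀ i, ((C.map (algebraMap ℝ ℂ) *ᵥ v) i).re = (C *ᵥ vr) i := by
    intro i
    simp [Matrix.mulVec, dotProduct, Complex.re_sum, Complex.mul_re, hvr]
  have him : ∀ i, ((C.map (algebraMap ℝ ℂ) *ᵥ v) i).im = (C *ᵥ vi) i := by
    intro i
    simp [Matrix.mulVec, dotProduct, Complex.im_sum, Complex.mul_im, hvi]
  have habs : ∀ (z : ℂ), ‖z‖ ^ 2 = z.re ^ 2 + z.im ^ 2 := by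
    intro z
    rw [Complex.sq_norm, Complex.normSq_apply]; ring
  have key : enorm (C.map (algebraMap ℝ ℂ) *ᵥ v) ^ 2
      = enorm (C *ᵥ vr) ^ 2 + enorm (C *ᵥ vi) ^ 2 := by
    rw [enorm_sq, enorm_sq, enorm_sq, ← Finset.sum_add_distrib]
    apply Finset.sum_congr rfl
    intro i _
    rw [habs, hre, him, Real.norm_eq_abs, Real.norm_eq_abs, sq_abs, sq_abs]
  have keyv : enorm v ^ 2 = enorm vr ^ 2 + enorm vi ^ 2 := by
    rw [enorm_sq, enorm_sq, enorm_sq, ← Finset.sum_add_distrib]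
    apply Finset.sum_congr rfl
    intro i _
    rw [habs, Real.norm_eq_abs, Real.norm_eq_abs, sq_abs, sq_abs]
  apply le_of_sq_le_sq (enorm_nonneg _) (mul_nonneg (norm_nonneg _) (enorm_nonneg _))
  rw [key, mul_pow, keyv, mul_add]
  have h1 : enorm (C *ᵥ vr) ^ 2 ≤ ‖C‖ ^ 2 * enorm vr ^ 2 := by
    rw [← mul_pow]
    exact pow_le_pow_left₀ (enorm_nonneg _) (enorm_mulVec_le C vr) 2
  have h2 : enorm (C *ᵥ vi) ^ 2 ≤ ‖C‖ ^ 2 * enorm vi ^ 2 := by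
    rw [← mul_pow]
    exact pow_le_pow_left₀ (enorm_nonneg _) (enorm_mulVec_le C vi) 2
  exact add_le_add h1 h2

lemma eval_charpoly' {m : ℕ} (A : Matrix (Fin m) (Fin m) ℂ) (t : ℂ) :
    A.charpoly.eval t = (t • (1 : Matrix (Fin m) (Fin m) ℂ) - A).det := by
  rw [Matrix.charpoly, ← Polynomial.coe_evalRingHom, RingHom.map_det]
  congr 1
  ext i j
  by_cases h : i = j <;>
    simp [h, Matrix.charmatrix_apply, Matrix.one_apply, Matrix.diagonal_apply]

lemma mem_specC_iff {m : ℕ} (A : Matrix (Fin m) (Fin m) ℝ) (t : ℂ) :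
    t ∈ specC A ↔ (t • (1 : Matrix (Fin m) (Fin m) ℂ) - A.map (algebraMap ℝ ℂ)).det = 0 := by
  rw [specC, Polynomial.mem_roots ((Matrix.charpoly_monic _).ne_zero),
    Polynomial.IsRoot, eval_charpoly']

lemma det_smul_one_sub_conj {m : ℕ} (P Q X : Matrix (Fin m) (Fin m) ℂ)
    (hPQ : P * Q = 1) (t : ℂ) :
    (t • (1 : Matrix (Fin m) (Fin m) ℂ) - P * X * Q).det
      = (t • (1 : Matrix (Fin m) (Fin m) ℂ) - X).det := by
  have h1 : t • (1 : Matrix (Fin m) (Fin m) ℂ) - P * X * Q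
      = P * (t • (1 : Matrix (Fin m) (Fin m) ℂ) - X) * Q := by
    rw [Matrix.mul_sub, Matrix.sub_mul]
    congr 1
    rw [Matrix.mul_smul, mul_one, Matrix.smul_mul, hPQ]
  have h2 : P.det * Q.det = 1 := by rw [← Matrix.det_mul, hPQ, Matrix.det_one]
  calc (t • (1 : Matrix (Fin m) (Fin m) ℂ) - P * X * Q).det
      = P.det * (t • (1 : Matrix (Fin m) (Fin m) ℂ) - X).det * Q.det := by
        rw [h1, Matrix.det_mul, Matrix.det_mul]
    _ = (t • (1 : Matrix (Fin m) (Fin m) ℂ) - X).det * (P.det * Q.det) := by ring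
    _ = (t • (1 : Matrix (Fin m) (Fin m) ℂ) - X).det := by rw [h2, mul_one]

end BFaux

open BFaux

/-- matrix form of Proposition 3.1, Bauer–Fike for the PD case:
with `Φ` symmetric positive definite, `K` symmetric, and `M = K·Φ⁻¹`, for every real
matrix `Mᵉ` and every complex eigenvalue `λᵉ` of `Mᵉ` there is a (real) eigenvalue `λ`
of `M` with `|λ − λᵉ| ≤ cond(Φ^{1/2})·‖M − Mᵉ‖`, where `Φ^{1/2}` is the symmetric
positive definite square root of `Φ` (represented by any `S` with `S.PosDef`, `S*S = Φ`). -/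
theorem stmt3 {N : ℕ} (Φ K : Matrix (Fin N) (Fin N) ℝ)
    (hΦ : Φ.PosDef) (hK : K.IsHermitian)
    (S : Matrix (Fin N) (Fin N) ℝ) (hS : S.PosDef) (hSsq : S * S = Φ)
    (Mε : Matrix (Fin N) (Fin N) ℝ) (lamε : ℂ) (hlamε : lamε ∈ specC Mε) :
    ∃ lam ∈ specC (K * Φ⁻¹), lam.im = 0 ∧
      ‖lam - lamε‖ ≤ (‖S‖ * ‖S⁻¹‖) * ‖K * Φ⁻¹ - Mε‖ := by
  classical
  rcases Nat.eq_zero_or_pos N with hN | hN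
  · subst hN
    exfalso
    simp [specC, Matrix.charpoly, Matrix.det_isEmpty] at hlamε
  set f := algebraMap ℝ ℂ with hf
  have hSdet : IsUnit S.det := (Matrix.isUnit_iff_isUnit_det S).mp hS.isUnit
  have hS1 : S⁻¹ * S = 1 := Matrix.nonsing_inv_mul S hSdet
  have hS2 : S * S⁻¹ = 1 := Matrix.mul_nonsing_inv S hSdet
  have hΦinv : Φ⁻¹ = S⁻¹ * S⁻¹ := by rw [← hSsq, Matrix.mul_inv_rev]
  set A : Matrix (Fin N) (Fin N) ℝ := S⁻¹ * K * S⁻¹ with hAdef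
  set Mm : Matrix (Fin N) (Fin N) ℝ := K * Φ⁻¹ with hMdef
  have hMSA : Mm = S * A * S⁻¹ := by
    rw [hMdef, hAdef, hΦinv]
    simp only [← mul_assoc]
    rw [hS2, one_mul]
  -- A is symmetric
  have hSi : (S⁻¹).IsHermitian := hS.1.inv
  have hA_herm : A.IsHermitian := by
    rw [hAdef]
    show (S⁻¹ * K * S⁻¹)ᴴ = S⁻¹ * K * S⁻¹
    rw [Matrix.conjTranspose_mul, Matrix.conjTranspose_mul, hSi, hK, mul_assoc]
  have hAc : (A.map f).IsHermitian := by
    show (A.map f)ᴴ = A.map f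
    rw [← Matrix.conjTranspose_map f (fun x => (Complex.conj_ofReal x).symm), hA_herm]
  -- spectral theorem
  set U := hAc.eigenvectorUnitary with hUdef
  set μ : Fin N → ℝ := hAc.eigenvalues with hμdef
  have hspec : A.map f = (U : Matrix (Fin N) (Fin N) ℂ)
      * Matrix.diagonal (fun i => (μ i : ℂ)) * star (U : Matrix (Fin N) (Fin N) ℂ) := by
    have h := hAc.spectral_theorem
    rw [Unitary.conjStarAlgAut_apply] at h
    rw [h]; rfl
  -- pick the closest eigenvalue
  obtain ⟨i₀, -, hmin⟩ := Finset.exists_min_image Finset.univ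
    (fun i => ‖(μ i : ℂ) - lamε‖) ⟨⟨0, hN⟩, Finset.mem_univ _⟩
  set δ := ‖(μ i₀ : ℂ) - lamε‖ with hδdef
  refine ⟨(μ i₀ : ℂ), ?_, by simp, ?_⟩
  · -- membership in specC (K * Φ⁻¹)
    rw [mem_specC_iff]
    have hmapS : (S.map f) * ((S⁻¹).map f) = 1 := by
      rw [← Matrix.map_mul, hS2, Matrix.map_one f (map_zero f) (map_one f)]
    have hMc : Mm.map f = (S.map f) * (A.map f) * ((S⁻¹).map f) := by
      rw [hMSA, Matrix.map_mul, Matrix.map_mul]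
    have hUU : (U : Matrix (Fin N) (Fin N) ℂ) * star (U : Matrix (Fin N) (Fin N) ℂ) = 1 :=
      Matrix.mem_unitaryGroup_iff.mp U.2
    rw [hMc, det_smul_one_sub_conj _ _ _ hmapS, hspec,
      det_smul_one_sub_conj _ _ _ hUU]
    have hdiag : (μ i₀ : ℂ) • (1 : Matrix (Fin N) (Fin N) ℂ)
        - Matrix.diagonal (fun i => (μ i : ℂ))
        = Matrix.diagonal (fun i => (μ i₀ : ℂ) - (μ i : ℂ)) := by
      rw [Matrix.smul_one_eq_diagonal, Matrix.diagonal_sub]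
    rw [hdiag, Matrix.det_diagonal]
    exact Finset.prod_eq_zero (Finset.mem_univ i₀) (sub_self _)
  · -- the distance bound
    have hdetε : ((lamε) • (1 : Matrix (Fin N) (Fin N) ℂ) - Mε.map f).det = 0 :=
      (mem_specC_iff _ _).mp hlamε
    obtain ⟨v, hv0, hv⟩ := (Matrix.exists_mulVec_eq_zero_iff).mpr hdetε
    have hvv : (Mε.map f) *ᵥ v = lamε • v := by
      have := hv
      rw [Matrix.sub_mulVec, sub_eq_zero, Matrix.smul_mulVec, Matrix.one_mulVec] at this
      exact this.symm
    have hmapS : (S.map f) * ((S⁻¹).map f) = 1 := by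
      rw [← Matrix.map_mul, hS2, Matrix.map_one f (map_zero f) (map_one f)]
    have hmapS' : ((S⁻¹).map f) * (S.map f) = 1 := by
      rw [← Matrix.map_mul, hS1, Matrix.map_one f (map_zero f) (map_one f)]
    set B : Matrix (Fin N) (Fin N) ℝ := S⁻¹ * Mε * S with hBdef
    set u : Fin N → ℂ := ((S⁻¹).map f) *ᵥ v with hudef
    have hu0 : u ≠ 0 := by
      intro h
      apply hv0
      have hSu : (S.map f) *ᵥ u = v := by
        rw [hudef, Matrix.mulVec_mulVec, hmapS, Matrix.one_mulVec]
      rw [h, Matrix.mulVec_zero] at hSu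
      exact hSu.symm
    have hBu : (B.map f) *ᵥ u = lamε • u := by
      rw [hBdef, Matrix.map_mul, Matrix.map_mul, hudef, Matrix.mulVec_mulVec,
        mul_assoc, mul_assoc, hmapS, mul_one, ← Matrix.mulVec_mulVec, hvv,
        Matrix.mulVec_smul]
    clear_value u
    clear hudef
    -- key vector identity
    have hkey : ((A - B).map f) *ᵥ u
        = ((U : Matrix (Fin N) (Fin N) ℂ)
            * Matrix.diagonal (fun i => (μ i : ℂ) - lamε)
            * star (U : Matrix (Fin N) (Fin N) ℂ)) *ᵥ u := by
      have hconj : (A.map f) - lamε • (1 : Matrix (Fin N) (Fin N) ℂ)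
          = (U : Matrix (Fin N) (Fin N) ℂ)
            * Matrix.diagonal (fun i => (μ i : ℂ) - lamε)
            * star (U : Matrix (Fin N) (Fin N) ℂ) := by
        have h1 : lamε • (1 : Matrix (Fin N) (Fin N) ℂ)
            = (U : Matrix (Fin N) (Fin N) ℂ) * (lamε • (1 : Matrix (Fin N) (Fin N) ℂ))
              * star (U : Matrix (Fin N) (Fin N) ℂ) := by
          rw [Matrix.mul_smul, mul_one, Matrix.smul_mul, Matrix.mem_unitaryGroup_iff.mp U.2]
        rw [hspec, h1, ← Matrix.sub_mul, ← Matrix.mul_sub,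
          Matrix.smul_one_eq_diagonal, Matrix.diagonal_sub]
      have hsub : ((A - B).map f) *ᵥ u = ((A.map f) - lamε • 1) *ᵥ u := by
        rw [Matrix.map_sub f (fun a b => map_sub f a b), Matrix.sub_mulVec, Matrix.sub_mulVec, hBu,
          Matrix.smul_mulVec, Matrix.one_mulVec]
      rw [hsub, hconj]
    -- lower bound for the RHS of hkey
    set w : Fin N → ℂ := (star (U : Matrix (Fin N) (Fin N) ℂ)) *ᵥ u with hwdef
    have hδ0 : (0:ℝ) ≤ δ := norm_nonneg _
    have hd : ∀ i, δ ≤ ‖(μ i : ℂ) - lamε‖ := by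
      intro i
      exact hmin i (Finset.mem_univ i)
    have hwu : BFaux.enorm w = BFaux.enorm u := by
      rw [hwdef, ← Unitary.coe_star]
      exact enorm_unitary_mulVec hN (star U) u
    have hlow : δ * BFaux.enorm u ≤ BFaux.enorm (((A - B).map f) *ᵥ u) := by
      rw [hkey]
      have : ((U : Matrix (Fin N) (Fin N) ℂ)
            * Matrix.diagonal (fun i => (μ i : ℂ) - lamε)
            * star (U : Matrix (Fin N) (Fin N) ℂ)) *ᵥ u
          = (U : Matrix (Fin N) (Fin N) ℂ) *ᵥ
              (Matrix.diagonal (fun i => (μ i : ℂ) - lamε) *ᵥ w) := by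
        rw [hwdef, Matrix.mulVec_mulVec, Matrix.mulVec_mulVec, mul_assoc]
        
      rw [this, enorm_unitary_mulVec hN U]
      calc δ * BFaux.enorm u = δ * BFaux.enorm w := by rw [hwu]
        _ ≤ BFaux.enorm (Matrix.diagonal (fun i => (μ i : ℂ) - lamε) *ᵥ w) :=
            le_enorm_diagonal_mulVec _ hδ0 hd w
    -- upper bound
    have hup : BFaux.enorm (((A - B).map f) *ᵥ u) ≤ ‖A - B‖ * BFaux.enorm u :=
      enorm_map_mulVec_le (A - B) u
    have hABnorm : ‖A - B‖ ≤ ‖S⁻¹‖ * ‖Mm - Mε‖ * ‖S‖ := by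
      have hAB : A - B = S⁻¹ * (Mm - Mε) * S := by
        have hA' : A = S⁻¹ * Mm * S := by
          rw [hMSA]
          simp only [← mul_assoc]
          rw [hS1, one_mul, mul_assoc, hS1, mul_one]
        rw [hA', hBdef, Matrix.mul_sub, Matrix.sub_mul]
      rw [hAB]
      calc ‖S⁻¹ * (Mm - Mε) * S‖ ≤ ‖S⁻¹ * (Mm - Mε)‖ * ‖S‖ := Matrix.l2_opNorm_mul _ _
        _ ≤ ‖S⁻¹‖ * ‖Mm - Mε‖ * ‖S‖ :=
            mul_le_mul_of_nonneg_right (Matrix.l2_opNorm_mul _ _) (norm_nonneg _)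
    have hu_pos : 0 < BFaux.enorm u := enorm_pos u hu0
    have hδle : δ ≤ ‖S⁻¹‖ * ‖Mm - Mε‖ * ‖S‖ := by
      have := hlow.trans (hup.trans (mul_le_mul_of_nonneg_right hABnorm hu_pos.le))
      exact le_of_mul_le_mul_right this hu_pos
    calc ‖(μ i₀ : ℂ) - lamε‖ = δ := rfl
      _ ≤ ‖S⁻¹‖ * ‖Mm - Mε‖ * ‖S‖ := hδle
      _ = (‖S‖ * ‖S⁻¹‖) * ‖Mm - Mε‖ := by ring
end

section
/- Let N ≥ M, let P be an N×M real matrix with PᵀP invertible, let P† = (PᵀP)⁻¹Pᵀ and Q = I_N − P·P†. Let W be an N×(N−M) real matrix with WᵀW = I_{N−M}, PᵀW = 0, and W·Wᵀ = Q. Let Φ be an N×N real symmetric matrix such that WᵀΦW is positive definite. Define A = W·(WᵀΦW)⁻¹·Wᵀ and B = P†·(I_N − Φ·A). Then: (i) Φ·A + P·B = I_N and Pᵀ·A = 0 (so (A,B) solves the saddle-point system); (ii) A = Q·A = A·Q = Q·A·Q; and (iii) A is symmetric positive semidefinite. -/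
open Matrix

/-- properties of the matrices `A = W·(WᵀΦW)⁻¹·Wᵀ` and
`B = P†·(I − Φ·A)` arising from the saddle-point system. -/
theorem stmt4 {N M : ℕ} (hMN : M ≤ N)
    (P : Matrix (Fin N) (Fin M) ℝ) (hP : IsUnit (Pᵀ * P))
    (W : Matrix (Fin N) (Fin (N - M)) ℝ)
    (hWo : Wᵀ * W = (1 : Matrix (Fin (N - M)) (Fin (N - M)) ℝ))
    (hPW : Pᵀ * W = 0)
    (hWQ : W * Wᵀ = (1 : Matrix (Fin N) (Fin N) ℝ) - P * ((Pᵀ * P)⁻¹ * Pᵀ))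
    (Φ : Matrix (Fin N) (Fin N) ℝ) (hΦ : Φ.IsHermitian)
    (hWΦW : (Wᵀ * Φ * W).PosDef) :
    -- notation: P† = (PᵀP)⁻¹Pᵀ, Q = I − P·P†, A = W·(WᵀΦW)⁻¹·Wᵀ, B = P†·(I − Φ·A)
    Φ * (W * (Wᵀ * Φ * W)⁻¹ * Wᵀ) +
        P * (((Pᵀ * P)⁻¹ * Pᵀ) * ((1 : Matrix (Fin N) (Fin N) ℝ) -
          Φ * (W * (Wᵀ * Φ * W)⁻¹ * Wᵀ))) = (1 : Matrix (Fin N) (Fin N) ℝ) ∧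
    Pᵀ * (W * (Wᵀ * Φ * W)⁻¹ * Wᵀ) = 0 ∧
    (W * (Wᵀ * Φ * W)⁻¹ * Wᵀ) =
      ((1 : Matrix (Fin N) (Fin N) ℝ) - P * ((Pᵀ * P)⁻¹ * Pᵀ)) *
        (W * (Wᵀ * Φ * W)⁻¹ * Wᵀ) ∧
    (W * (Wᵀ * Φ * W)⁻¹ * Wᵀ) =
      (W * (Wᵀ * Φ * W)⁻¹ * Wᵀ) *
        ((1 : Matrix (Fin N) (Fin N) ℝ) - P * ((Pᵀ * P)⁻¹ * Pᵀ)) ∧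
    (W * (Wᵀ * Φ * W)⁻¹ * Wᵀ) =
      ((1 : Matrix (Fin N) (Fin N) ℝ) - P * ((Pᵀ * P)⁻¹ * Pᵀ)) *
        (W * (Wᵀ * Φ * W)⁻¹ * Wᵀ) *
        ((1 : Matrix (Fin N) (Fin N) ℝ) - P * ((Pᵀ * P)⁻¹ * Pᵀ)) ∧
    (W * (Wᵀ * Φ * W)⁻¹ * Wᵀ).PosSemidef := by
  set S := Wᵀ * Φ * W with hSdef
  have hSunit : IsUnit S.det := hWΦW.det_pos.ne'.isUnit
  have hSinv : S * S⁻¹ = 1 := mul_nonsing_inv _ hSunit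
  -- Q·A = A
  have hQA : ((1 : Matrix (Fin N) (Fin N) ℝ) - P * ((Pᵀ * P)⁻¹ * Pᵀ)) *
      (W * S⁻¹ * Wᵀ) = W * S⁻¹ * Wᵀ := by
    rw [← hWQ]
    calc W * Wᵀ * (W * S⁻¹ * Wᵀ) = W * (Wᵀ * W) * (S⁻¹ * Wᵀ) := by
          simp only [Matrix.mul_assoc]
      _ = W * S⁻¹ * Wᵀ := by rw [hWo, Matrix.mul_one, Matrix.mul_assoc]
  -- A·Q = A
  have hAQ : (W * S⁻¹ * Wᵀ) *
      ((1 : Matrix (Fin N) (Fin N) ℝ) - P * ((Pᵀ * P)⁻¹ * Pᵀ)) = W * S⁻¹ * Wᵀ := by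
    rw [← hWQ]
    calc (W * S⁻¹ * Wᵀ) * (W * Wᵀ) = W * S⁻¹ * (Wᵀ * W) * Wᵀ := by
          simp only [Matrix.mul_assoc]
      _ = W * S⁻¹ * Wᵀ := by rw [hWo, Matrix.mul_one]
  -- Pᵀ·A = 0
  have hPA : Pᵀ * (W * S⁻¹ * Wᵀ) = 0 := by
    rw [← Matrix.mul_assoc, ← Matrix.mul_assoc, hPW, Matrix.zero_mul, Matrix.zero_mul]
  -- Q·Φ·A = Q
  have hQΦA : (W * Wᵀ) * (Φ * (W * S⁻¹ * Wᵀ)) = W * Wᵀ := by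
    calc (W * Wᵀ) * (Φ * (W * S⁻¹ * Wᵀ))
        = W * ((Wᵀ * Φ * W) * S⁻¹) * Wᵀ := by simp only [Matrix.mul_assoc]
      _ = W * Wᵀ := by rw [← hSdef, hSinv, Matrix.mul_one]
  refine ⟨?_, hPA, hQA.symm, hAQ.symm, ?_, ?_⟩
  · have h1 : P * (((Pᵀ * P)⁻¹ * Pᵀ) * ((1 : Matrix (Fin N) (Fin N) ℝ) -
        Φ * (W * S⁻¹ * Wᵀ))) = (P * ((Pᵀ * P)⁻¹ * Pᵀ)) *
          ((1 : Matrix (Fin N) (Fin N) ℝ) - Φ * (W * S⁻¹ * Wᵀ)) := by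
      simp only [Matrix.mul_assoc]
    rw [h1]
    have h2 : P * ((Pᵀ * P)⁻¹ * Pᵀ) = 1 - W * Wᵀ := by
      rw [hWQ, sub_sub_cancel]
    rw [h2, Matrix.sub_mul, Matrix.one_mul, Matrix.mul_sub, Matrix.mul_one, hQΦA]
    abel
  · rw [hQA, hAQ]
  · have hSinvPSD : (S⁻¹).PosSemidef := hWΦW.inv.posSemidef
    have := hSinvPSD.mul_mul_conjTranspose_same W
    simpa [Matrix.conjTranspose_eq_transpose_of_trivial, Matrix.mul_assoc] using this
end

section
/- (Matrix form of Lemma 4.1.) Let N > M, let P be an N×M real matrix with PᵀP invertible, P† = (PᵀP)⁻¹Pᵀ, Q = I_N − P·P†, and let W be an N×(N−M) real matrix with WᵀW = I_{N−M}, PᵀW = 0, and W·Wᵀ = Q. Let Φ be an N×N real symmetric matrix with WᵀΦW positive definite, let K be an N×N real symmetric matrix, and let Λ be an M×M real diagonal matrix. Define A = W·(WᵀΦW)⁻¹·Wᵀ, B = P†·(I_N − Φ·A), and M_X = K·A + P·Λ·B. Then there exist an N×(N−M) real matrix Z, an M×(N−M) real matrix R, and an (N−M)×(N−M) real diagonal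 matrix Θ such that the N×N matrix V = [P Z] (columns of P followed by columns of Z) is invertible and M_X = V · [[Λ, R],[0, Θ]] · V⁻¹, where [[Λ, R],[0, Θ]] denotes the block upper triangular matrix with these blocks. Consequently σ(M_X) equals the set of diagonal entries of Λ together with the diagonal entries of Θ. Moreover, if WᵀKW is positive semidefinite then every diagonal entry of Θ is nonnegative, and if WᵀKW is positive definite then every diagonal entry of Θ is strictly positive. -/
open Matrix Polynomial

lemma charpoly_diagonal' {n : Type*} [DecidableEq n] [Fintype n] {R : Type*} [CommRing R]
    (d : n → R) : (Matrix.diagonal d).charpoly = ∏ i, (X - C (d i)) := by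
  have h : charmatrix (Matrix.diagonal d) = Matrix.diagonal (fun i => (X : R[X]) - C (d i)) := by
    ext i j
    by_cases hij : i = j
    · subst hij; simp
    · simp [charmatrix_apply_ne _ _ _ hij, Matrix.diagonal_apply_ne _ hij]
  rw [Matrix.charpoly, h, Matrix.det_diagonal]

lemma charpoly_similar {n : Type*} [DecidableEq n] [Fintype n] {R : Type*} [CommRing R]
    {V T MX : Matrix n n R} (hV : IsUnit V) (h : MX * V = V * T) :
    MX.charpoly = T.charpoly := by
  have hmap : (charmatrix MX) * V.map C = V.map C * charmatrix T := by
    rw [charmatrix, charmatrix, sub_mul, mul_sub]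
    congr 1
    · exact (Matrix.scalar_commute (X : R[X]) (fun r => Commute.all _ _) (V.map C)).symm ▸ rfl
    · have := congrArg (C : R →+* R[X]).mapMatrix h
      simpa [_root_.map_mul, RingHom.mapMatrix_apply] using this
  have hdet := congrArg Matrix.det hmap
  rw [Matrix.det_mul, Matrix.det_mul] at hdet
  have hu : IsUnit (V.map C).det := by
    rw [← RingHom.mapMatrix_apply, ← RingHom.map_det]
    exact ((Matrix.isUnit_iff_isUnit_det V).mp hV).map _
  rw [mul_comm] at hdet
  exact hu.mul_left_cancel hdet

lemma roots_prod_X_sub_C' {n : Type*} [Fintype n] {K : Type*} [Field K] (f : n → K) :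
    (∏ i, (X - C (f i))).roots = Finset.univ.val.map f := by
  have h : (∏ i, (X - C (f i))) = ((Finset.univ.val.map f).map (fun a => X - C a)).prod := by
    rw [Multiset.map_map]; rfl
  rw [h, Polynomial.roots_multiset_prod_X_sub_C]

lemma posDef_conj' {n : Type*} [Fintype n] {A B : Matrix n n ℝ} (hA : A.PosDef)
    (hB : ∀ x, B *ᵥ x = 0 → x = 0) : (Bᴴ * A * B).PosDef := by
  exact hA.conjTranspose_mul_mul_same fun x y hxy =>
    sub_eq_zero.mp (hB _ (by rw [Matrix.mulVec_sub, hxy, sub_self]))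

open scoped MatrixOrder in
lemma exists_sqrt' {n : Type*} [Fintype n] [DecidableEq n] {S : Matrix n n ℝ}
    (h : S.PosSemidef) : ∃ T : Matrix n n ℝ, Tᴴ = T ∧ T * T = S :=
  ⟨CFC.sqrt S, (CFC.sqrt_nonneg S).posSemidef.1, CFC.sqrt_mul_sqrt_self S h.nonneg⟩

set_option maxHeartbeats 1000000 in
/-- matrix form of Lemma 4.1: the differentiation matrix
`M_X = K·A + P·Λ·B` is similar to a block upper triangular matrix with diagonal
principal blocks `Λ` and `Θ`, via `V = [P Z]`; consequently its spectrum is the set of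
diagonal entries of `Λ` and `Θ`, and `Θ` is (strictly) positive when `WᵀKW` is. -/
theorem stmt6 {N M : ℕ} (hMN : M < N)
    (P : Matrix (Fin N) (Fin M) ℝ) (hP : IsUnit (Pᵀ * P))
    (W : Matrix (Fin N) (Fin (N - M)) ℝ)
    (hWo : Wᵀ * W = (1 : Matrix (Fin (N - M)) (Fin (N - M)) ℝ))
    (hPW : Pᵀ * W = 0)
    (hWQ : W * Wᵀ = (1 : Matrix (Fin N) (Fin N) ℝ) - P * ((Pᵀ * P)⁻¹ * Pᵀ))
    (Φ K : Matrix (Fin N) (Fin N) ℝ) (hΦ : Φ.IsHermitian) (hK : K.IsHermitian)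
    (hWΦW : (Wᵀ * Φ * W).PosDef)
    (lam : Fin M → ℝ)
    -- A = W·(WᵀΦW)⁻¹·Wᵀ, B = P†·(I − Φ·A), M_X = K·A + P·Λ·B :
    (A MX : Matrix (Fin N) (Fin N) ℝ) (B : Matrix (Fin M) (Fin N) ℝ)
    (hA : A = W * (Wᵀ * Φ * W)⁻¹ * Wᵀ)
    (hB : B = ((Pᵀ * P)⁻¹ * Pᵀ) * ((1 : Matrix (Fin N) (Fin N) ℝ) - Φ * A))
    (hMX : MX = K * A + P * (Matrix.diagonal lam) * B) :
    ∃ (Z : Matrix (Fin N) (Fin (N - M)) ℝ)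
      (R : Matrix (Fin M) (Fin (N - M)) ℝ)
      (θ : Fin (N - M) → ℝ),
      IsUnit (Matrix.reindex (Equiv.refl (Fin N))
          (finSumFinEquiv.trans (finCongr (Nat.add_sub_cancel' hMN.le)))
          (Matrix.fromCols P Z)) ∧
      MX =
        (Matrix.reindex (Equiv.refl (Fin N))
            (finSumFinEquiv.trans (finCongr (Nat.add_sub_cancel' hMN.le)))
            (Matrix.fromCols P Z)) *
        (Matrix.reindex (finSumFinEquiv.trans (finCongr (Nat.add_sub_cancel' hMN.le)))
            (finSumFinEquiv.trans (finCongr (Nat.add_sub_cancel' hMN.le)))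
            (Matrix.fromBlocks (Matrix.diagonal lam) R 0 (Matrix.diagonal θ))) *
        (Matrix.reindex (Equiv.refl (Fin N))
            (finSumFinEquiv.trans (finCongr (Nat.add_sub_cancel' hMN.le)))
            (Matrix.fromCols P Z))⁻¹ ∧
      (∀ μ : ℂ, μ ∈ specC MX ↔ ((∃ i, μ = (lam i : ℂ)) ∨ (∃ j, μ = (θ j : ℂ)))) ∧
      ((Wᵀ * K * W).PosSemidef → ∀ j, 0 ≤ θ j) ∧
      ((Wᵀ * K * W).PosDef → ∀ j, 0 < θ j) := by
  classical
  set e : Fin M ⊕ Fin (N - M) ≃ Fin N :=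
    finSumFinEquiv.trans (finCongr (Nat.add_sub_cancel' hMN.le)) with he
  set Pd : Matrix (Fin M) (Fin N) ℝ := (Pᵀ * P)⁻¹ * Pᵀ with hPd
  have hPdet : IsUnit (Pᵀ * P).det := (Matrix.isUnit_iff_isUnit_det _).mp hP
  have hPdP : Pd * P = 1 := by
    rw [hPd, Matrix.mul_assoc ((Pᵀ * P)⁻¹) Pᵀ P]; exact Matrix.nonsing_inv_mul _ hPdet
  have hWtP : Wᵀ * P = 0 := by
    have := congrArg Matrix.transpose hPW
    simpa [Matrix.transpose_mul] using this
  set S : Matrix (Fin (N - M)) (Fin (N - M)) ℝ := (Wᵀ * Φ * W)⁻¹ with hS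
  have hSpd : S.PosDef := hWΦW.inv
  set Ssq : Matrix (Fin (N - M)) (Fin (N - M)) ℝ := Classical.choose (exists_sqrt' hSpd.posSemidef) with hSsq
  have hSsqH : Ssqᴴ = Ssq := (Classical.choose_spec (exists_sqrt' hSpd.posSemidef)).1
  have hSsqmul : Ssq * Ssq = S := (Classical.choose_spec (exists_sqrt' hSpd.posSemidef)).2
  have hSsqdet : IsUnit Ssq.det := by
    have h1 : Ssq.det * Ssq.det = S.det := by rw [← Matrix.det_mul, hSsqmul]
    have h2 : S.det ≠ 0 := ne_of_gt hSpd.det_pos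
    exact isUnit_iff_ne_zero.mpr (fun h => h2 (by rw [← h1, h, zero_mul]))
  have hSsqinv : Ssq⁻¹ * Ssq = 1 := Matrix.nonsing_inv_mul _ hSsqdet
  have hSsqinv' : Ssq * Ssq⁻¹ = 1 := Matrix.mul_nonsing_inv _ hSsqdet
  set Cm : Matrix (Fin (N - M)) (Fin (N - M)) ℝ := Wᵀ * K * W with hCm
  have hCmH : Cm.IsHermitian := by
    rw [hCm, ← Matrix.conjTranspose_eq_transpose_of_trivial]
    exact Matrix.isHermitian_conjTranspose_mul_mul W hK
  set H : Matrix (Fin (N - M)) (Fin (N - M)) ℝ := Ssq * Cm * Ssq with hHdef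
  have hHH : H.IsHermitian := by
    have := Matrix.isHermitian_conjTranspose_mul_mul Ssq hCmH
    rwa [hSsqH] at this
  set θ : Fin (N - M) → ℝ := hHH.eigenvalues with hθ
  set U : Matrix (Fin (N - M)) (Fin (N - M)) ℝ :=
    (hHH.eigenvectorUnitary : Matrix (Fin (N - M)) (Fin (N - M)) ℝ) with hU
  have hmem := (hHH.eigenvectorUnitary).2
  rw [Unitary.mem_iff] at hmem
  have hUstar : star U * U = 1 := hmem.1
  have hUU : U * star U = 1 := hmem.2
  have hspec : H = U * Matrix.diagonal θ * star U := by
    have := hHH.spectral_theorem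
    rwa [Unitary.conjStarAlgAut_apply, RCLike.ofReal_real_eq_id, Function.id_comp] at this
  have hHU : H * U = U * Matrix.diagonal θ := by
    rw [hspec]
    calc U * Matrix.diagonal θ * star U * U
        = U * Matrix.diagonal θ * (star U * U) := by rw [Matrix.mul_assoc (U * Matrix.diagonal θ) (star U) U]
      _ = U * Matrix.diagonal θ := by rw [hUstar, Matrix.mul_one]
  set Y : Matrix (Fin (N - M)) (Fin (N - M)) ℝ := Ssq⁻¹ * U with hY
  have hUdet : IsUnit U.det := by
    have h7 := congrArg Matrix.det hUU
    rw [Matrix.det_mul, Matrix.det_one] at h7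
    exact IsUnit.of_mul_eq_one _ h7
  have hSsqidet : IsUnit (Ssq⁻¹).det := by
    have h7 := congrArg Matrix.det hSsqinv
    rw [Matrix.det_mul, Matrix.det_one] at h7
    exact IsUnit.of_mul_eq_one _ h7
  have hYdet : IsUnit Y.det := by
    rw [hY, Matrix.det_mul]; exact hSsqidet.mul hUdet
  have hCSY : Cm * (S * Y) = Y * Matrix.diagonal θ := by
    have h1 : Cm * (S * Y) = Cm * (Ssq * U) := by
      have hin : Ssq * Ssq * (Ssq⁻¹ * U) = Ssq * U := by
        calc Ssq * Ssq * (Ssq⁻¹ * U) = Ssq * (Ssq * Ssq⁻¹) * U := by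
              simp only [Matrix.mul_assoc]
          _ = Ssq * U := by rw [hSsqinv', Matrix.mul_one]
      rw [← hSsqmul, hY, hin]
    have h2 : Y * Matrix.diagonal θ = Cm * (Ssq * U) := by
      rw [hY]
      calc Ssq⁻¹ * U * Matrix.diagonal θ = Ssq⁻¹ * (U * Matrix.diagonal θ) := by
            rw [Matrix.mul_assoc Ssq⁻¹ U (Matrix.diagonal θ)]
        _ = Ssq⁻¹ * (H * U) := by rw [hHU]
        _ = Ssq⁻¹ * Ssq * (Cm * (Ssq * U)) := by rw [hHdef]; simp only [Matrix.mul_assoc]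
        _ = Cm * (Ssq * U) := by rw [hSsqinv, Matrix.one_mul]
    rw [h1, h2]
  -- basic products
  have hAP : A * P = 0 := by
    rw [hA]
    calc W * S * Wᵀ * P = W * (S * (Wᵀ * P)) := by simp only [Matrix.mul_assoc]
      _ = 0 := by rw [hWtP, Matrix.mul_zero, Matrix.mul_zero]
  have hBP : B * P = 1 := by
    rw [hB, Matrix.mul_assoc Pd _ P, Matrix.sub_mul, Matrix.one_mul, Matrix.mul_assoc Φ A P, hAP,
      Matrix.mul_zero, sub_zero, hPdP]
  have hMXP : MX * P = P * Matrix.diagonal lam := by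
    rw [hMX, Matrix.add_mul, Matrix.mul_assoc K A P, hAP, Matrix.mul_zero, zero_add,
      Matrix.mul_assoc (P * Matrix.diagonal lam) B P, hBP, Matrix.mul_one]
  have hAW : A * W = W * S := by
    rw [hA]
    calc W * S * Wᵀ * W = W * (S * (Wᵀ * W)) := by simp only [Matrix.mul_assoc]
      _ = W * S := by rw [hWo, Matrix.mul_one]
  have hBW : B * W = Pd * (W - Φ * (W * S)) := by
    rw [hB, Matrix.mul_assoc Pd _ W, Matrix.sub_mul, Matrix.one_mul, Matrix.mul_assoc Φ A W, hAW]
  have hone : (1 : Matrix (Fin N) (Fin N) ℝ) = W * Wᵀ + P * Pd := by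
    rw [hWQ]; abel
  set R0 : Matrix (Fin M) (Fin (N - M)) ℝ :=
    Pd * (K * (W * S)) + Matrix.diagonal lam * (Pd * (W - Φ * (W * S))) with hR0
  have hKWS : K * (W * S) = W * (Cm * S) + P * (Pd * (K * (W * S))) := by
    conv_lhs => rw [← Matrix.one_mul (K * (W * S))]
    have e1 : W * Wᵀ * (K * (W * S)) = W * (Cm * S) := by
      rw [hCm]; simp only [Matrix.mul_assoc]
    have e2 : P * Pd * (K * (W * S)) = P * (Pd * (K * (W * S))) := by
      rw [Matrix.mul_assoc P Pd (K * (W * S))]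
    rw [hone, Matrix.add_mul, e1, e2]
  have hMXW : MX * W = W * (Cm * S) + P * R0 := by
    rw [hMX, Matrix.add_mul, Matrix.mul_assoc K A W, hAW,
      Matrix.mul_assoc (P * Matrix.diagonal lam) B W, hBW, hKWS, hR0]
    simp only [Matrix.mul_add, Matrix.mul_assoc, add_assoc]
  have hMXZ : MX * (W * Y) = P * (R0 * Y) + W * Y * Matrix.diagonal θ := by
    rw [← Matrix.mul_assoc MX W Y, hMXW, Matrix.add_mul]
    have h3 : W * (Cm * S) * Y = W * Y * Matrix.diagonal θ := by
      calc W * (Cm * S) * Y = W * (Cm * (S * Y)) := by simp only [Matrix.mul_assoc]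
        _ = W * (Y * Matrix.diagonal θ) := by rw [hCSY]
        _ = W * Y * Matrix.diagonal θ := by rw [Matrix.mul_assoc W Y (Matrix.diagonal θ)]
    rw [h3, Matrix.mul_assoc P R0 Y, add_comm]
  have hMXV : MX * Matrix.fromCols P (W * Y) =
      Matrix.fromCols P (W * Y) *
        Matrix.fromBlocks (Matrix.diagonal lam) (R0 * Y) 0 (Matrix.diagonal θ) := by
    rw [Matrix.mul_fromCols, Matrix.fromCols_mul_fromBlocks, hMXP, hMXZ]
    simp only [Matrix.mul_zero, add_zero]
  have hinvV : Matrix.fromRows Pd (Y⁻¹ * Wᵀ) * Matrix.fromCols P (W * Y) = 1 := by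
    rw [Matrix.fromRows_mul_fromCols]
    have b12 : Pd * (W * Y) = 0 := by
      rw [hPd]
      calc (Pᵀ * P)⁻¹ * Pᵀ * (W * Y) = (Pᵀ * P)⁻¹ * (Pᵀ * W * Y) := by
            simp only [Matrix.mul_assoc]
        _ = 0 := by rw [hPW, Matrix.zero_mul, Matrix.mul_zero]
    have b21 : Y⁻¹ * Wᵀ * P = 0 := by rw [Matrix.mul_assoc Y⁻¹ Wᵀ P, hWtP, Matrix.mul_zero]
    have b22 : Y⁻¹ * Wᵀ * (W * Y) = 1 := by
      calc Y⁻¹ * Wᵀ * (W * Y) = Y⁻¹ * (Wᵀ * W * Y) := by simp only [Matrix.mul_assoc]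
        _ = 1 := by rw [hWo, Matrix.one_mul, Matrix.nonsing_inv_mul _ hYdet]
    rw [hPdP, b12, b21, b22, Matrix.fromBlocks_one]
  have hVinvVe : (Matrix.reindex e (Equiv.refl (Fin N))) (Matrix.fromRows Pd (Y⁻¹ * Wᵀ)) *
      (Matrix.reindex (Equiv.refl (Fin N)) e) (Matrix.fromCols P (W * Y)) = 1 := by
    rw [Matrix.reindex_apply, Matrix.reindex_apply, Matrix.submatrix_mul_equiv, hinvV,
      Matrix.submatrix_one_equiv]
  have hVedet : IsUnit ((Matrix.reindex (Equiv.refl (Fin N)) e)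
      (Matrix.fromCols P (W * Y))).det := by
    have h7 := congrArg Matrix.det hVinvVe
    rw [Matrix.det_mul, Matrix.det_one] at h7
    exact IsUnit.of_mul_eq_one _ (by rw [mul_comm] at h7; exact h7)
  have hVeUnit : IsUnit ((Matrix.reindex (Equiv.refl (Fin N)) e)
      (Matrix.fromCols P (W * Y))) := (Matrix.isUnit_iff_isUnit_det _).mpr hVedet
  have hMXsub : MX = MX.submatrix ⇑(Equiv.refl (Fin N)).symm ⇑(Equiv.refl (Fin N)).symm := by
    simp
  have hMXVe : MX * (Matrix.reindex (Equiv.refl (Fin N)) e) (Matrix.fromCols P (W * Y)) =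
      (Matrix.reindex (Equiv.refl (Fin N)) e) (Matrix.fromCols P (W * Y)) *
      (Matrix.reindex e e)
        (Matrix.fromBlocks (Matrix.diagonal lam) (R0 * Y) 0 (Matrix.diagonal θ)) := by
    rw [Matrix.reindex_apply, Matrix.reindex_apply]
    conv_lhs => rw [hMXsub]
    rw [Matrix.submatrix_mul_equiv, Matrix.submatrix_mul_equiv, hMXV]
  refine ⟨W * Y, R0 * Y, θ, hVeUnit, ?_, ?_, ?_, ?_⟩
  · rw [← hMXVe, Matrix.mul_nonsing_inv_cancel_right _ _ hVedet]
  · have hcp : MX.charpoly = (∏ i, (X - C (lam i))) * ∏ j, (X - C (θ j)) := by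
      rw [charpoly_similar hVeUnit hMXVe, Matrix.charpoly_reindex,
        Matrix.charpoly_fromBlocks_zero₂₁, charpoly_diagonal', charpoly_diagonal']
    have hspecC : specC MX = Finset.univ.val.map (fun i => ((lam i : ℝ) : ℂ)) +
        Finset.univ.val.map (fun j => ((θ j : ℝ) : ℂ)) := by
      unfold specC
      rw [Matrix.charpoly_map, hcp, Polynomial.map_mul, Polynomial.map_prod,
        Polynomial.map_prod]
      simp only [Polynomial.map_sub, Polynomial.map_X, Polynomial.map_C,
        Complex.coe_algebraMap]
      rw [Polynomial.roots_mul, roots_prod_X_sub_C', roots_prod_X_sub_C']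
      apply mul_ne_zero <;>
        exact (Polynomial.monic_prod_of_monic _ _
          (fun i _ => Polynomial.monic_X_sub_C _)).ne_zero
    intro μ
    rw [hspecC]
    simp only [Multiset.mem_add, Multiset.mem_map]
    constructor
    · rintro (⟨i, _, rfl⟩ | ⟨j, _, rfl⟩)
      · exact Or.inl ⟨i, rfl⟩
      · exact Or.inr ⟨j, rfl⟩
    · rintro (⟨i, rfl⟩ | ⟨j, rfl⟩)
      · exact Or.inl ⟨i, Finset.mem_val.mpr (Finset.mem_univ i), rfl⟩
      · exact Or.inr ⟨j, Finset.mem_val.mpr (Finset.mem_univ j), rfl⟩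
  · intro hCsd j
    have hHsd : H.PosSemidef := by
      have h6 := hCsd.conjTranspose_mul_mul_same Ssq
      rw [hSsqH] at h6
      exact h6
    exact hHsd.eigenvalues_nonneg j
  · intro hCpd j
    have hinj : ∀ x, Ssq *ᵥ x = 0 → x = 0 := by
      intro x hx
      have h5 : Ssq⁻¹ *ᵥ (Ssq *ᵥ x) = x := by
        rw [Matrix.mulVec_mulVec, hSsqinv, Matrix.one_mulVec]
      rw [hx, Matrix.mulVec_zero] at h5
      exact h5.symm
    have hHpd : H.PosDef := by
      have h6 := posDef_conj' hCpd hinj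
      rw [hSsqH] at h6
      exact h6
    exact hHpd.eigenvalues_pos j
end

section
/- (Abstract form of Proposition 4.2, a generalized Bauer–Fike theorem.) Let N > M ≥ 0 and suppose the N×N real matrix M_X has a factorization M_X = V · [[Λ, R],[0, Θ]] · V⁻¹, where V is an invertible N×N real matrix, Λ is an M×M real diagonal matrix, Θ is an (N−M)×(N−M) real diagonal matrix, and R is an M×(N−M) real matrix. Then for any N×N real matrix Mᵉ and any complex eigenvalue μ of Mᵉ, dist(μ, σ(M_X)) ≤ max( 2κ·‖M_X − Mᵉ‖, sqrt( 2κ·‖R‖·‖M_X − Mᵉ‖ ) ), where κ = cond(V) = ‖V‖·‖V⁻¹‖. -/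
open Matrix
open scoped Matrix.Norms.L2Operator

variable {𝕜 : Type*} [RCLike 𝕜] {m n : Type*} [Fintype m] [Fintype n]

lemma euc_norm_sq (x : EuclideanSpace 𝕜 n) : ‖x‖ ^ 2 = ∑ i, ‖x i‖ ^ 2 := by
  rw [EuclideanSpace.norm_eq, Real.sq_sqrt (by positivity)]

lemma le_of_sq_le_sq'' {a b : ℝ} (ha : 0 ≤ a) (hb : 0 ≤ b) (h : a ^ 2 ≤ b ^ 2) : a ≤ b := by
  nlinarith

lemma aux_opNorm_le [DecidableEq n] (A : Matrix m n 𝕜) {c : ℝ} (hc : 0 ≤ c)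
    (h : ∀ x : EuclideanSpace 𝕜 n,
      ‖(WithLp.equiv 2 (m → 𝕜)).symm (A *ᵥ (WithLp.equiv 2 (n → 𝕜)) x)‖ ≤ c * ‖x‖) :
    ‖A‖ ≤ c := by
  rw [Matrix.l2_opNorm_def]
  exact ContinuousLinearMap.opNorm_le_bound _ hc fun x => h x

lemma aux_mulVec_le [DecidableEq n] (A : Matrix m n 𝕜) (x : n → 𝕜) :
    ‖(WithLp.equiv 2 (m → 𝕜)).symm (A *ᵥ x)‖ ≤ ‖A‖ * ‖(WithLp.equiv 2 (n → 𝕜)).symm x‖ :=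
  A.l2_opNorm_mulVec ((WithLp.equiv 2 (n → 𝕜)).symm x)

lemma aux_norm_diagonal_le [DecidableEq n] (v : n → 𝕜) {t : ℝ} (ht : 0 ≤ t)
    (h : ∀ i, ‖v i‖ ≤ t) : ‖diagonal v‖ ≤ t := by
  refine aux_opNorm_le _ ht fun x => ?_
  refine le_of_sq_le_sq'' (norm_nonneg _) (by positivity) ?_
  rw [mul_pow, euc_norm_sq, euc_norm_sq]
  rw [Finset.mul_sum]
  refine Finset.sum_le_sum fun i _ => ?_
  have : (WithLp.equiv 2 (n → 𝕜)).symm (diagonal v *ᵥ (WithLp.equiv 2 (n → 𝕜)) x) i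
      = v i * x i := by
    simp [Matrix.mulVec_diagonal]
  rw [this, norm_mul, mul_pow]
  have h1 : ‖v i‖ ^ 2 ≤ t ^ 2 := by nlinarith [norm_nonneg (v i), h i]
  nlinarith [norm_nonneg (x i), sq_nonneg (‖x i‖)]

lemma euc_norm_comp_equiv {m' : Type*} [Fintype m'] (e : m' ≃ m) (y : m → 𝕜) :
    ‖(WithLp.equiv 2 (m' → 𝕜)).symm (y ∘ e)‖ = ‖(WithLp.equiv 2 (m → 𝕜)).symm y‖ := by
  rw [EuclideanSpace.norm_eq, EuclideanSpace.norm_eq]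
  congr 1
  simp only [WithLp.equiv_symm_apply, PiLp.toLp_apply, Function.comp]
  exact Equiv.sum_comp e (fun i => ‖y i‖ ^ 2)

lemma aux_norm_submatrix_le {m' n' : Type*} [Fintype m'] [Fintype n'] [DecidableEq n]
    [DecidableEq n'] (A : Matrix m n 𝕜) (e₁ : m' ≃ m) (e₂ : n' ≃ n) :
    ‖A.submatrix e₁ e₂‖ ≤ ‖A‖ := by
  refine aux_opNorm_le _ (norm_nonneg _) fun x => ?_
  rw [Matrix.submatrix_mulVec_equiv]
  calc ‖(WithLp.equiv 2 (m' → 𝕜)).symm ((A *ᵥ ((WithLp.equiv 2 (n' → 𝕜)) x ∘ e₂.symm)) ∘ e₁)‖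
      = ‖(WithLp.equiv 2 (m → 𝕜)).symm (A *ᵥ ((WithLp.equiv 2 (n' → 𝕜)) x ∘ e₂.symm))‖ :=
        euc_norm_comp_equiv e₁ _
    _ ≤ ‖A‖ * ‖(WithLp.equiv 2 (n → 𝕜)).symm ((WithLp.equiv 2 (n' → 𝕜)) x ∘ e₂.symm)‖ :=
        aux_mulVec_le _ _
    _ = ‖A‖ * ‖x‖ := by
        rw [euc_norm_comp_equiv e₂.symm ((WithLp.equiv 2 (n' → 𝕜)) x),
          Equiv.symm_apply_apply]

lemma aux_norm_fromBlocks_offdiag {p q : Type*} [Fintype p] [Fintype q] [DecidableEq p]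
    [DecidableEq q] (B : Matrix p q 𝕜) :
    ‖(fromBlocks 0 B 0 0 : Matrix (p ⊕ q) (p ⊕ q) 𝕜)‖ ≤ ‖B‖ := by
  refine aux_opNorm_le _ (norm_nonneg _) fun x => ?_
  set z := (WithLp.equiv 2 (p ⊕ q → 𝕜)) x with hz
  have hmv : (fromBlocks 0 B 0 0 : Matrix (p ⊕ q) (p ⊕ q) 𝕜) *ᵥ z
      = Sum.elim (B *ᵥ (z ∘ Sum.inr)) 0 := by
    rw [Matrix.fromBlocks_mulVec]
    simp
  rw [hmv]
  have h1 : ‖(WithLp.equiv 2 (p ⊕ q → 𝕜)).symm (Sum.elim (B *ᵥ (z ∘ Sum.inr)) 0)‖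
      = ‖(WithLp.equiv 2 (p → 𝕜)).symm (B *ᵥ (z ∘ Sum.inr))‖ := by
    rw [EuclideanSpace.norm_eq, EuclideanSpace.norm_eq]
    congr 1
    simp only [WithLp.equiv_symm_apply, PiLp.toLp_apply]
    rw [Fintype.sum_sum_type]
    simp
  have h2 : ‖(WithLp.equiv 2 (q → 𝕜)).symm (z ∘ Sum.inr)‖ ≤ ‖x‖ := by
    refine le_of_sq_le_sq'' (norm_nonneg _) (norm_nonneg _) ?_
    rw [euc_norm_sq, euc_norm_sq]
    rw [show (∑ i, ‖x i‖ ^ 2 : ℝ) = ∑ i : p, ‖x (Sum.inl i)‖ ^ 2 + ∑ i : q, ‖x (Sum.inr i)‖ ^ 2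
      from Fintype.sum_sum_type _]
    have : ∀ i : q, ‖(WithLp.equiv 2 (q → 𝕜)).symm (z ∘ Sum.inr) i‖ ^ 2 = ‖x (Sum.inr i)‖ ^ 2 :=
      fun i => rfl
    rw [Finset.sum_congr rfl fun i _ => this i]
    have hnn : (0:ℝ) ≤ ∑ i : p, ‖x (Sum.inl i)‖ ^ 2 := by positivity
    linarith
  calc ‖(WithLp.equiv 2 (p ⊕ q → 𝕜)).symm (Sum.elim (B *ᵥ (z ∘ Sum.inr)) 0)‖
      = ‖(WithLp.equiv 2 (p → 𝕜)).symm (B *ᵥ (z ∘ Sum.inr))‖ := h1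
    _ ≤ ‖B‖ * ‖(WithLp.equiv 2 (q → 𝕜)).symm (z ∘ Sum.inr)‖ := aux_mulVec_le _ _
    _ ≤ ‖B‖ * ‖x‖ := by exact mul_le_mul_of_nonneg_left h2 (norm_nonneg _)

lemma aux_norm_map_complex_le [DecidableEq n] (A : Matrix m n ℝ) :
    ‖A.map (algebraMap ℝ ℂ)‖ ≤ ‖A‖ := by
  have sqb : ∀ vv : n → ℝ, ∑ i, ((A *ᵥ vv) i) ^ 2 ≤ ‖A‖ ^ 2 * ∑ j, (vv j) ^ 2 := by
    intro vv
    have h := aux_mulVec_le (𝕜 := ℝ) A vv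
    have h2 := pow_le_pow_left₀ (norm_nonneg _) h 2
    rw [mul_pow, euc_norm_sq, euc_norm_sq] at h2
    simpa [Real.norm_eq_abs, sq_abs] using h2
  refine aux_opNorm_le _ (norm_nonneg _) fun x => ?_
  refine le_of_sq_le_sq'' (norm_nonneg _) (by positivity) ?_
  rw [mul_pow, euc_norm_sq, euc_norm_sq]
  set z := (WithLp.equiv 2 (n → ℂ)) x with hz
  set u : n → ℝ := fun j => (x j).re with hu
  set w : n → ℝ := fun j => (x j).im with hw
  have hre : ∀ i, ((A.map (algebraMap ℝ ℂ) *ᵥ z) i).re = (A *ᵥ u) i := by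
    intro i
    simp only [Matrix.mulVec, dotProduct, Matrix.map_apply, Complex.re_sum]
    refine Finset.sum_congr rfl fun j _ => ?_
    show (algebraMap ℝ ℂ (A i j) * z j).re = A i j * (x j).re
    simp only [Complex.mul_re, Complex.coe_algebraMap, Complex.ofReal_re, Complex.ofReal_im]
    show A i j * (x j).re - 0 * (x j).im = A i j * (x j).re
    ring
  have him : ∀ i, ((A.map (algebraMap ℝ ℂ) *ᵥ z) i).im = (A *ᵥ w) i := by
    intro i
    simp only [Matrix.mulVec, dotProduct, Matrix.map_apply, Complex.im_sum]
    refine Finset.sum_congr rfl fun j _ => ?_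
    show (algebraMap ℝ ℂ (A i j) * z j).im = A i j * (x j).im
    simp only [Complex.mul_im, Complex.coe_algebraMap, Complex.ofReal_re, Complex.ofReal_im]
    show A i j * (x j).im + 0 * (x j).re = A i j * (x j).im
    ring
  calc ∑ i, ‖(WithLp.equiv 2 (m → ℂ)).symm (A.map (algebraMap ℝ ℂ) *ᵥ z) i‖ ^ 2
      = ∑ i, (((A *ᵥ u) i) ^ 2 + ((A *ᵥ w) i) ^ 2) := by
        refine Finset.sum_congr rfl fun i _ => ?_
        have : ‖(A.map (algebraMap ℝ ℂ) *ᵥ z) i‖ ^ 2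
            = ((A.map (algebraMap ℝ ℂ) *ᵥ z) i).re ^ 2
              + ((A.map (algebraMap ℝ ℂ) *ᵥ z) i).im ^ 2 := by
          rw [Complex.sq_norm, Complex.normSq_apply]; ring
        rw [show ‖(WithLp.equiv 2 (m → ℂ)).symm (A.map (algebraMap ℝ ℂ) *ᵥ z) i‖
            = ‖(A.map (algebraMap ℝ ℂ) *ᵥ z) i‖ from rfl, this, hre i, him i]
    _ = (∑ i, ((A *ᵥ u) i) ^ 2) + ∑ i, ((A *ᵥ w) i) ^ 2 := Finset.sum_add_distrib
    _ ≤ ‖A‖ ^ 2 * (∑ j, (u j) ^ 2) + ‖A‖ ^ 2 * (∑ j, (w j) ^ 2) :=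
        add_le_add (sqb u) (sqb w)
    _ = ‖A‖ ^ 2 * ∑ j, ((u j) ^ 2 + (w j) ^ 2) := by rw [Finset.sum_add_distrib]; ring
    _ = ‖A‖ ^ 2 * ∑ i, ‖x i‖ ^ 2 := by
        congr 1
        refine Finset.sum_congr rfl fun j _ => ?_
        simp only [hu, hw]
        rw [Complex.sq_norm, Complex.normSq_apply]
        ring

open Polynomial in
lemma aux_eval_charpoly {n : Type*} [Fintype n] [DecidableEq n] {Rg : Type*} [CommRing Rg]
    (A : Matrix n n Rg) (μ : Rg) :
    A.charpoly.eval μ = (μ • (1 : Matrix n n Rg) - A).det := by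
  rw [Matrix.charpoly, ← Polynomial.coe_evalRingHom, RingHom.map_det]
  congr 1
  ext i j
  by_cases h : i = j
  · subst h
    simp [Matrix.charmatrix_apply_eq, Matrix.one_apply]
  · simp [Matrix.charmatrix_apply_ne _ _ _ h, Matrix.one_apply, h]

open Polynomial in
lemma aux_charpoly_conj {n : Type*} [Fintype n] [DecidableEq n] {Rg : Type*} [CommRing Rg]
    (P Q A : Matrix n n Rg) (h : P * Q = 1) : (P * A * Q).charpoly = A.charpoly := by
  have hmap : (P.map (C : Rg →+* Rg[X])) * (Q.map (C : Rg →+* Rg[X])) = 1 := by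
    rw [← Matrix.map_mul, h, Matrix.map_one _ (map_zero C) (map_one C)]
  have hc : charmatrix (P * A * Q)
      = (P.map (C : Rg →+* Rg[X])) * charmatrix A * (Q.map (C : Rg →+* Rg[X])) := by
    unfold charmatrix
    rw [mul_sub, sub_mul]
    congr 1
    · rw [← (Matrix.scalar_commute (X : Rg[X]) (fun r' => Commute.all _ _) (P.map C)).eq,
        mul_assoc, hmap, mul_one]
    · simp only [RingHom.mapMatrix_apply]
      rw [← Matrix.map_mul, ← Matrix.map_mul]
  rw [Matrix.charpoly, Matrix.charpoly, hc, Matrix.det_mul, Matrix.det_mul]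
  have hd : (P.map (C : Rg →+* Rg[X])).det * (Q.map (C : Rg →+* Rg[X])).det = 1 := by
    rw [← Matrix.det_mul, hmap, Matrix.det_one]
  calc (P.map (C : Rg →+* Rg[X])).det * (charmatrix A).det * (Q.map (C : Rg →+* Rg[X])).det
      = (charmatrix A).det * ((P.map (C : Rg →+* Rg[X])).det * (Q.map (C : Rg →+* Rg[X])).det) :=
        by ring
    _ = (charmatrix A).det := by rw [hd, mul_one]

open Polynomial in
lemma aux_charpoly_diagonal {n : Type*} [Fintype n] [DecidableEq n] [LinearOrder n]
    {Rg : Type*} [CommRing Rg] (d : n → Rg) :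
    (diagonal d).charpoly = ∏ i, (X - C (d i)) := by
  rw [Matrix.charpoly_of_upperTriangular _ (Matrix.blockTriangular_diagonal d)]
  simp

open Polynomial in
lemma aux_roots_diagonal {n : Type*} [Fintype n] [DecidableEq n] [LinearOrder n] (d : n → ℂ) :
    ((diagonal d).charpoly).roots = Finset.univ.val.map d := by
  rw [aux_charpoly_diagonal, Finset.prod_eq_multiset_prod]
  rw [show (Finset.univ.val.map fun i => X - C (d i))
      = (Finset.univ.val.map d).map (fun a => X - C a) by
      rw [Multiset.map_map]; rfl]
  exact Polynomial.roots_multiset_prod_X_sub_C _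

set_option maxHeartbeats 1600000 in
/-- abstract form of Proposition 4.2, a generalized Bauer–Fike theorem:
if `M_X = V·[[Λ,R],[0,Θ]]·V⁻¹` with `Λ, Θ` diagonal, then for any `Mᵉ` and any complex
eigenvalue `μ` of `Mᵉ`, the distance from `μ` to `σ(M_X)` is at most
`max(2κ‖M_X − Mᵉ‖, sqrt(2κ‖R‖‖M_X − Mᵉ‖))` with `κ = ‖V‖·‖V⁻¹‖`. -/
theorem stmt7 {N M : ℕ} (hMN : M < N)
    (MX V Mε : Matrix (Fin N) (Fin N) ℝ) (hV : IsUnit V)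
    (lam : Fin M → ℝ) (θ : Fin (N - M) → ℝ)
    (R : Matrix (Fin M) (Fin (N - M)) ℝ)
    (hfact : MX =
      V *
      (Matrix.reindex (finSumFinEquiv.trans (finCongr (Nat.add_sub_cancel' hMN.le)))
          (finSumFinEquiv.trans (finCongr (Nat.add_sub_cancel' hMN.le)))
          (Matrix.fromBlocks (Matrix.diagonal lam) R 0 (Matrix.diagonal θ))) *
      V⁻¹)
    (μ : ℂ) (hμ : μ ∈ specC Mε) :
    ∃ lam₀ ∈ specC MX,
      ‖μ - lam₀‖ ≤
        max (2 * (‖V‖ * ‖V⁻¹‖) * ‖MX - Mε‖)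
          (Real.sqrt (2 * (‖V‖ * ‖V⁻¹‖) * ‖R‖ * ‖MX - Mε‖)) := by
  classical
  have c := algebraMap ℝ ℂ
  set e : Fin M ⊕ Fin (N - M) ≃ Fin N :=
    finSumFinEquiv.trans (finCongr (Nat.add_sub_cancel' hMN.le)) with he
  set lam' : Fin M → ℂ := fun i => ((lam i : ℝ) : ℂ) with hlam'
  set θ' : Fin (N - M) → ℂ := fun j => ((θ j : ℝ) : ℂ) with hθ'
  set R' : Matrix (Fin M) (Fin (N - M)) ℂ := R.map (algebraMap ℝ ℂ) with hR'
  set V' : Matrix (Fin N) (Fin N) ℂ := V.map (algebraMap ℝ ℂ) with hV'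
  set Vinv' : Matrix (Fin N) (Fin N) ℂ := (V⁻¹).map (algebraMap ℝ ℂ) with hVinv'
  have hdet : IsUnit V.det := (Matrix.isUnit_iff_isUnit_det V).mp hV
  have hVV : V * V⁻¹ = 1 := Matrix.mul_nonsing_inv V hdet
  have hVV' : V' * Vinv' = 1 := by
    rw [hV', hVinv', ← Matrix.map_mul, hVV,
      Matrix.map_one _ (map_zero (algebraMap ℝ ℂ)) (map_one (algebraMap ℝ ℂ))]
  have hVV'2 : Vinv' * V' = 1 := mul_eq_one_comm.mp hVV'
  have hB : (Matrix.fromBlocks (diagonal lam) R 0 (diagonal θ)).map (algebraMap ℝ ℂ)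
      = Matrix.fromBlocks (diagonal lam') R' 0 (diagonal θ') := by
    rw [Matrix.fromBlocks_map]
    rw [Matrix.diagonal_map (map_zero _), Matrix.diagonal_map (map_zero _),
      Matrix.map_zero _ (map_zero _)]
    rfl
  have hMXc : MX.map (algebraMap ℝ ℂ)
      = V' * (Matrix.reindex e e (Matrix.fromBlocks (diagonal lam') R' 0 (diagonal θ'))) * Vinv' := by
    rw [hfact, Matrix.map_mul, Matrix.map_mul]
    congr 1
    congr 1
    rw [Matrix.reindex_apply, Matrix.reindex_apply, ← Matrix.submatrix_map, hB]
  -- spectrum of MX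
  have hspecMX : specC MX = Finset.univ.val.map lam' + Finset.univ.val.map θ' := by
    unfold specC
    rw [hMXc, aux_charpoly_conj _ _ _ hVV', Matrix.charpoly_reindex,
      Matrix.charpoly_fromBlocks_zero₂₁, Polynomial.roots_mul
        (mul_ne_zero (Matrix.charpoly_monic _).ne_zero (Matrix.charpoly_monic _).ne_zero),
      aux_roots_diagonal, aux_roots_diagonal]
  have hmemlam : ∀ i, lam' i ∈ specC MX := by
    intro i; rw [hspecMX]
    exact Multiset.mem_add.mpr (Or.inl (Multiset.mem_map_of_mem _ (Finset.mem_univ i)))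
  have hmemθ : ∀ j, θ' j ∈ specC MX := by
    intro j; rw [hspecMX]
    exact Multiset.mem_add.mpr (Or.inr (Multiset.mem_map_of_mem _ (Finset.mem_univ j)))
  -- minimizer
  have hne : (specC MX).toFinset.Nonempty :=
    ⟨θ' ⟨0, Nat.sub_pos_of_lt hMN⟩, Multiset.mem_toFinset.mpr (hmemθ _)⟩
  obtain ⟨lam₀, hl₀mem, hl₀min⟩ :=
    Finset.exists_min_image (specC MX).toFinset (fun z => ‖μ - z‖) hne
  refine ⟨lam₀, Multiset.mem_toFinset.mp hl₀mem, ?_⟩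
  by_contra hcon
  push_neg at hcon
  set d : ℝ := ‖μ - lam₀‖ with hd
  have hmaxnn : (0:ℝ) ≤ max (2 * (‖V‖ * ‖V⁻¹‖) * ‖MX - Mε‖)
      (Real.sqrt (2 * (‖V‖ * ‖V⁻¹‖) * ‖R‖ * ‖MX - Mε‖)) :=
    le_max_of_le_right (Real.sqrt_nonneg _)
  have hd0 : 0 < d := lt_of_le_of_lt hmaxnn hcon
  have h2 : 2 * (‖V‖ * ‖V⁻¹‖) * ‖MX - Mε‖ < d := lt_of_le_of_lt (le_max_left _ _) hcon
  have h3 : 2 * (‖V‖ * ‖V⁻¹‖) * ‖R‖ * ‖MX - Mε‖ < d ^ 2 :=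
    (Real.sqrt_lt' hd0).mp (lt_of_le_of_lt (le_max_right _ _) hcon)
  have hdist : ∀ z ∈ specC MX, d ≤ ‖μ - z‖ :=
    fun z hz => hl₀min z (Multiset.mem_toFinset.mpr hz)
  set a : Fin M → ℂ := fun i => lam' i - μ with ha
  set b : Fin (N - M) → ℂ := fun j => θ' j - μ with hb
  have hanorm : ∀ i, d ≤ ‖a i‖ := by
    intro i
    rw [ha, norm_sub_rev]
    exact hdist _ (hmemlam i)
  have hbnorm : ∀ j, d ≤ ‖b j‖ := by
    intro j
    rw [hb, norm_sub_rev]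
    exact hdist _ (hmemθ j)
  have ha0 : ∀ i, a i ≠ 0 := fun i h0 => by
    have := hanorm i; rw [h0, norm_zero] at this; linarith
  have hb0 : ∀ j, b j ≠ 0 := fun j h0 => by
    have := hbnorm j; rw [h0, norm_zero] at this; linarith
  -- eigenvector of Mε
  have hμroot : ((Mε.map (algebraMap ℝ ℂ)).charpoly).eval μ = 0 := by
    unfold specC at hμ
    exact (Polynomial.mem_roots'.mp hμ).2
  rw [aux_eval_charpoly] at hμroot
  obtain ⟨x, hx0, hxe⟩ := (Matrix.exists_mulVec_eq_zero_iff).mpr hμroot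
  have hMεx : (Mε.map (algebraMap ℝ ℂ)) *ᵥ x = μ • x := by
    rw [Matrix.sub_mulVec, Matrix.smul_mulVec, Matrix.one_mulVec] at hxe
    exact (sub_eq_zero.mp hxe).symm
  -- explicit inverse
  set ainv : Fin M → ℂ := fun i => (a i)⁻¹ with hainv
  set binv : Fin (N - M) → ℂ := fun j => (b j)⁻¹ with hbinv
  set T0 : Matrix (Fin M ⊕ Fin (N - M)) (Fin M ⊕ Fin (N - M)) ℂ :=
    fromBlocks (diagonal a) R' 0 (diagonal b) with hT0
  set G : Matrix (Fin M ⊕ Fin (N - M)) (Fin M ⊕ Fin (N - M)) ℂ :=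
    fromBlocks (diagonal ainv) (-(diagonal ainv * R' * diagonal binv)) 0 (diagonal binv) with hG
  have hdaainv : diagonal a * diagonal ainv = 1 := by
    rw [Matrix.diagonal_mul_diagonal, ← Matrix.diagonal_one]
    exact congrArg Matrix.diagonal (funext fun i => mul_inv_cancel₀ (ha0 i))
  have hdbbinv : diagonal b * diagonal binv = 1 := by
    rw [Matrix.diagonal_mul_diagonal, ← Matrix.diagonal_one]
    exact congrArg Matrix.diagonal (funext fun j => mul_inv_cancel₀ (hb0 j))
  have hT0G : T0 * G = 1 := by
    rw [hT0, hG, Matrix.fromBlocks_multiply]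
    have hTL : diagonal a * diagonal ainv + R' * (0 : Matrix (Fin (N - M)) (Fin M) ℂ) = 1 := by
      rw [Matrix.mul_zero, add_zero, hdaainv]
    have hTR : diagonal a * -(diagonal ainv * R' * diagonal binv) + R' * diagonal binv = 0 := by
      rw [Matrix.mul_neg, ← Matrix.mul_assoc, ← Matrix.mul_assoc, hdaainv, Matrix.one_mul,
        neg_add_cancel]
    have hBL : (0 : Matrix (Fin (N - M)) (Fin M) ℂ) * diagonal ainv
        + diagonal b * (0 : Matrix (Fin (N - M)) (Fin M) ℂ) = 0 := by
      rw [Matrix.zero_mul, Matrix.mul_zero, add_zero]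
    have hBR : (0 : Matrix (Fin (N - M)) (Fin M) ℂ) * -(diagonal ainv * R' * diagonal binv)
        + diagonal b * diagonal binv = 1 := by
      rw [Matrix.zero_mul, zero_add, hdbbinv]
    rw [hTL, hTR, hBL, hBR, Matrix.fromBlocks_one]
  
  have hGT0 : G * T0 = 1 := mul_eq_one_comm.mp hT0G
  -- similarity for MX - μ•1
  have hFBsub : fromBlocks (diagonal lam') R' 0 (diagonal θ')
      - μ • (1 : Matrix (Fin M ⊕ Fin (N - M)) (Fin M ⊕ Fin (N - M)) ℂ) = T0 := by
    rw [hT0]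
    ext i j
    rcases i with i | i <;> rcases j with j | j
    · by_cases h : i = j
      · subst h; simp [ha, Matrix.one_apply]
      · simp [h, Matrix.one_apply, Matrix.diagonal_apply_ne _ h]
    · simp [Matrix.one_apply]
    · simp [Matrix.one_apply]
    · by_cases h : i = j
      · subst h; simp [hb, Matrix.one_apply]
      · simp [h, Matrix.one_apply, Matrix.diagonal_apply_ne _ h]
  have hre2 : Matrix.reindex e e (fromBlocks (diagonal lam') R' 0 (diagonal θ'))
      - μ • (1 : Matrix (Fin N) (Fin N) ℂ) = Matrix.reindex e e T0 := by
    rw [← hFBsub]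
    ext i j
    by_cases h : i = j
    · subst h
      simp [Matrix.reindex_apply, Matrix.submatrix_apply, Matrix.sub_apply, Matrix.smul_apply,
        Matrix.one_apply]
    · have h' : e.symm i ≠ e.symm j := fun hh => h (e.symm.injective hh)
      simp [Matrix.reindex_apply, Matrix.submatrix_apply, Matrix.sub_apply, Matrix.smul_apply,
        Matrix.one_apply, h, h']
  have hscalar : V' * (μ • (1 : Matrix (Fin N) (Fin N) ℂ)) * Vinv'
      = μ • (1 : Matrix (Fin N) (Fin N) ℂ) := by
    rw [Matrix.mul_smul, Matrix.mul_one, Matrix.smul_mul, hVV']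
  have hMμ : MX.map (algebraMap ℝ ℂ) - μ • (1 : Matrix (Fin N) (Fin N) ℂ)
      = V' * (Matrix.reindex e e T0) * Vinv' := by
    rw [hMXc, ← hre2]
    rw [show V' * (Matrix.reindex e e (fromBlocks (diagonal lam') R' 0 (diagonal θ'))
          - μ • (1 : Matrix (Fin N) (Fin N) ℂ)) * Vinv'
        = V' * (Matrix.reindex e e (fromBlocks (diagonal lam') R' 0 (diagonal θ'))) * Vinv'
          - V' * (μ • (1 : Matrix (Fin N) (Fin N) ℂ)) * Vinv' by
      rw [Matrix.mul_sub, Matrix.sub_mul]]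
    rw [hscalar]
  set P : Matrix (Fin N) (Fin N) ℂ := V' * (Matrix.reindex e e G) * Vinv' with hPdef
  have hGTre : (Matrix.reindex e e G) * (Matrix.reindex e e T0) = 1 := by
    rw [Matrix.reindex_apply, Matrix.reindex_apply, Matrix.submatrix_mul_equiv, hGT0,
      Matrix.submatrix_one_equiv]
  have hPinv : P * (MX.map (algebraMap ℝ ℂ) - μ • (1 : Matrix (Fin N) (Fin N) ℂ)) = 1 := by
    rw [hMμ, hPdef]
    have hassoc : V' * (Matrix.reindex e e G) * Vinv' * (V' * (Matrix.reindex e e T0) * Vinv')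
        = V' * ((Matrix.reindex e e G) * (Vinv' * V') * (Matrix.reindex e e T0)) * Vinv' := by
      simp only [Matrix.mul_assoc]
    rw [hassoc, hVV'2, Matrix.mul_one, hGTre, Matrix.mul_one, hVV']
  -- vector equation
  have hEmap : MX.map (algebraMap ℝ ℂ) - Mε.map (algebraMap ℝ ℂ)
      = (MX - Mε).map (algebraMap ℝ ℂ) := by
    ext i j
    simp [Matrix.sub_apply, map_sub]
  have hxeq : x = P *ᵥ (((MX - Mε).map (algebraMap ℝ ℂ)) *ᵥ x) := by
    have h1 : (MX.map (algebraMap ℝ ℂ) - μ • (1 : Matrix (Fin N) (Fin N) ℂ)) *ᵥ x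
        = ((MX - Mε).map (algebraMap ℝ ℂ)) *ᵥ x := by
      rw [← hEmap, Matrix.sub_mulVec, Matrix.sub_mulVec, hMεx, Matrix.smul_mulVec,
        Matrix.one_mulVec]
    rw [← h1, Matrix.mulVec_mulVec, hPinv, Matrix.one_mulVec]
  -- norms
  have hXvne : (WithLp.equiv 2 (Fin N → ℂ)).symm x ≠ 0 := by
    intro h0
    apply hx0
    have := congrArg (WithLp.equiv 2 (Fin N → ℂ)) h0
    simpa using this
  have hXv0 : 0 < ‖(WithLp.equiv 2 (Fin N → ℂ)).symm x‖ := norm_pos_iff.mpr hXvne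
  have hkey : ‖(WithLp.equiv 2 (Fin N → ℂ)).symm x‖
      ≤ ‖P‖ * (‖(MX - Mε).map (algebraMap ℝ ℂ)‖ * ‖(WithLp.equiv 2 (Fin N → ℂ)).symm x‖) := by
    calc ‖(WithLp.equiv 2 (Fin N → ℂ)).symm x‖
        = ‖(WithLp.equiv 2 (Fin N → ℂ)).symm
            (P *ᵥ (((MX - Mε).map (algebraMap ℝ ℂ)) *ᵥ x))‖ := by rw [← hxeq]
      _ ≤ ‖P‖ * ‖(WithLp.equiv 2 (Fin N → ℂ)).symm (((MX - Mε).map (algebraMap ℝ ℂ)) *ᵥ x)‖ :=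
          aux_mulVec_le _ _
      _ ≤ ‖P‖ * (‖(MX - Mε).map (algebraMap ℝ ℂ)‖ * ‖(WithLp.equiv 2 (Fin N → ℂ)).symm x‖) :=
          mul_le_mul_of_nonneg_left (aux_mulVec_le _ _) (norm_nonneg _)
  have hone : 1 ≤ ‖P‖ * ‖(MX - Mε).map (algebraMap ℝ ℂ)‖ := by
    nlinarith [hXv0, hkey, norm_nonneg P, norm_nonneg ((MX - Mε).map (algebraMap ℝ ℂ))]
  -- norm bounds
  have hdainv : ‖(diagonal ainv : Matrix (Fin M) (Fin M) ℂ)‖ ≤ d⁻¹ := by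
    refine aux_norm_diagonal_le _ (by positivity) fun i => ?_
    rw [hainv, norm_inv]
    exact inv_anti₀ hd0 (hanorm i)
  have hdbinv : ‖(diagonal binv : Matrix (Fin (N - M)) (Fin (N - M)) ℂ)‖ ≤ d⁻¹ := by
    refine aux_norm_diagonal_le _ (by positivity) fun j => ?_
    rw [hbinv, norm_inv]
    exact inv_anti₀ hd0 (hbnorm j)
  have hR'norm : ‖R'‖ ≤ ‖R‖ := aux_norm_map_complex_le R
  have hRnn : (0:ℝ) ≤ ‖R‖ := norm_nonneg _
  have hoffnorm : ‖diagonal ainv * R' * diagonal binv‖ ≤ d⁻¹ * ‖R‖ * d⁻¹ := by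
    calc ‖diagonal ainv * R' * diagonal binv‖
        ≤ ‖diagonal ainv * R'‖ * ‖diagonal binv‖ := Matrix.l2_opNorm_mul _ _
      _ ≤ (‖diagonal ainv‖ * ‖R'‖) * ‖diagonal binv‖ :=
          mul_le_mul_of_nonneg_right (Matrix.l2_opNorm_mul _ _) (norm_nonneg _)
      _ ≤ (d⁻¹ * ‖R‖) * d⁻¹ := by
          refine mul_le_mul (mul_le_mul hdainv hR'norm (norm_nonneg _) (by positivity))
            hdbinv (norm_nonneg _) (by positivity)
  -- split G
  have hGsplit : G = fromBlocks (diagonal ainv) 0 0 (diagonal binv)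
      + fromBlocks 0 (-(diagonal ainv * R' * diagonal binv)) 0 0 := by
    rw [hG, Matrix.fromBlocks_add]
    simp only [add_zero, zero_add]
  have hGdiag : (fromBlocks (diagonal ainv) 0 0 (diagonal binv)
      : Matrix (Fin M ⊕ Fin (N - M)) (Fin M ⊕ Fin (N - M)) ℂ)
      = diagonal (Sum.elim ainv binv) := Matrix.fromBlocks_diagonal _ _
  have hGdiagnorm : ‖diagonal (Sum.elim ainv binv)‖ ≤ d⁻¹ := by
    refine aux_norm_diagonal_le _ (by positivity) fun k => ?_
    cases k with
    | inl i => simpa using (by rw [norm_inv]; exact inv_anti₀ hd0 (hanorm i) :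
        ‖ainv i‖ ≤ d⁻¹)
    | inr j => simpa using (by rw [norm_inv]; exact inv_anti₀ hd0 (hbnorm j) :
        ‖binv j‖ ≤ d⁻¹)
  have hreGnorm : ‖Matrix.reindex e e G‖ ≤ d⁻¹ + d⁻¹ * ‖R‖ * d⁻¹ := by
    rw [Matrix.reindex_apply]
    calc ‖G.submatrix e.symm e.symm‖ ≤ ‖G‖ := aux_norm_submatrix_le _ _ _
      _ ≤ ‖(fromBlocks (diagonal ainv) 0 0 (diagonal binv)
            : Matrix (Fin M ⊕ Fin (N - M)) (Fin M ⊕ Fin (N - M)) ℂ)‖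
          + ‖(fromBlocks 0 (-(diagonal ainv * R' * diagonal binv)) 0 0
            : Matrix (Fin M ⊕ Fin (N - M)) (Fin M ⊕ Fin (N - M)) ℂ)‖ := by
          rw [hGsplit]; exact norm_add_le _ _
      _ ≤ d⁻¹ + d⁻¹ * ‖R‖ * d⁻¹ := by
          refine add_le_add ?_ ?_
          · rw [hGdiag]; exact hGdiagnorm
          · calc ‖(fromBlocks 0 (-(diagonal ainv * R' * diagonal binv)) 0 0
                : Matrix (Fin M ⊕ Fin (N - M)) (Fin M ⊕ Fin (N - M)) ℂ)‖
                ≤ ‖-(diagonal ainv * R' * diagonal binv)‖ := aux_norm_fromBlocks_offdiag _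
              _ = ‖diagonal ainv * R' * diagonal binv‖ := norm_neg _
              _ ≤ d⁻¹ * ‖R‖ * d⁻¹ := hoffnorm
  have hVnorm : ‖V'‖ ≤ ‖V‖ := aux_norm_map_complex_le V
  have hVinvnorm : ‖Vinv'‖ ≤ ‖V⁻¹‖ := aux_norm_map_complex_le _
  have hEnorm : ‖(MX - Mε).map (algebraMap ℝ ℂ)‖ ≤ ‖MX - Mε‖ := aux_norm_map_complex_le _
  have hVnn : (0:ℝ) ≤ ‖V‖ := norm_nonneg _
  have hVinn : (0:ℝ) ≤ ‖V⁻¹‖ := norm_nonneg _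
  have hgnn : (0:ℝ) ≤ d⁻¹ + d⁻¹ * ‖R‖ * d⁻¹ := by positivity
  have hPnorm : ‖P‖ ≤ ‖V‖ * ((d⁻¹ + d⁻¹ * ‖R‖ * d⁻¹) * ‖V⁻¹‖) := by
    rw [hPdef]
    calc ‖V' * Matrix.reindex e e G * Vinv'‖
        ≤ ‖V' * Matrix.reindex e e G‖ * ‖Vinv'‖ := Matrix.l2_opNorm_mul _ _
      _ ≤ (‖V'‖ * ‖Matrix.reindex e e G‖) * ‖Vinv'‖ :=
          mul_le_mul_of_nonneg_right (Matrix.l2_opNorm_mul _ _) (norm_nonneg _)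
      _ ≤ (‖V‖ * (d⁻¹ + d⁻¹ * ‖R‖ * d⁻¹)) * ‖V⁻¹‖ :=
          mul_le_mul (mul_le_mul hVnorm hreGnorm (norm_nonneg _) hVnn) hVinvnorm
            (norm_nonneg _) (by positivity)
      _ = ‖V‖ * ((d⁻¹ + d⁻¹ * ‖R‖ * d⁻¹) * ‖V⁻¹‖) := by ring
  -- final contradiction
  have hfin : 1 ≤ (‖V‖ * ((d⁻¹ + d⁻¹ * ‖R‖ * d⁻¹) * ‖V⁻¹‖)) * ‖MX - Mε‖ := by
    calc (1:ℝ) ≤ ‖P‖ * ‖(MX - Mε).map (algebraMap ℝ ℂ)‖ := hone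
      _ ≤ (‖V‖ * ((d⁻¹ + d⁻¹ * ‖R‖ * d⁻¹) * ‖V⁻¹‖)) * ‖MX - Mε‖ :=
          mul_le_mul hPnorm hEnorm (norm_nonneg _) (by positivity)
  have hd2 : d ^ 2 ≤ ‖V‖ * ‖V⁻¹‖ * ‖MX - Mε‖ * d + ‖V‖ * ‖V⁻¹‖ * ‖R‖ * ‖MX - Mε‖ := by
    have h := mul_le_mul_of_nonneg_left hfin (le_of_lt (by positivity : (0:ℝ) < d ^ 2))
    calc d ^ 2 = d ^ 2 * 1 := by ring
      _ ≤ d ^ 2 * ((‖V‖ * ((d⁻¹ + d⁻¹ * ‖R‖ * d⁻¹) * ‖V⁻¹‖)) * ‖MX - Mε‖) := h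
      _ = ‖V‖ * ‖V⁻¹‖ * ‖MX - Mε‖ * d + ‖V‖ * ‖V⁻¹‖ * ‖R‖ * ‖MX - Mε‖ := by
          field_simp
  nlinarith [hd2, h2, h3, hd0, mul_pos hd0 (sub_pos.mpr h2), hVnn, hVinn, hRnn,
    norm_nonneg (MX - Mε)]
end

section
/- Let M_X = V·T·V⁻¹ where V and T are N×N real matrices and V is invertible. Let Mᵉ be an N×N real matrix and let μ ∈ ℂ be an eigenvalue of Mᵉ which is not an eigenvalue of M_X. Then the complex matrix μI_N − T is invertible and ‖(μI_N − T)⁻¹‖⁻¹ ≤ cond(V)·‖M_X − Mᵉ‖; equivalently, 1 ≤ ‖(μI_N − T)⁻¹‖ · cond(V) · ‖M_X − Mᵉ‖. -/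
open Matrix
open scoped Matrix.Norms.L2Operator

open Polynomial

lemma eval_charpoly_aux {n : ℕ} (A : Matrix (Fin n) (Fin n) ℂ) (μ : ℂ) :
    (A.charpoly).eval μ = (μ • (1 : Matrix (Fin n) (Fin n) ℂ) - A).det := by
  rw [Matrix.charpoly, ← Polynomial.coe_evalRingHom, RingHom.map_det]
  congr 1
  ext i j
  by_cases h : i = j <;>
    simp [h, charmatrix_apply, Matrix.map_apply, Matrix.one_apply, Matrix.diagonal_apply]

lemma norm_map_le {m n : ℕ} (M : Matrix (Fin m) (Fin n) ℝ) :
    ‖M.map (algebraMap ℝ ℂ)‖ ≤ ‖M‖ := by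
  rw [Matrix.l2_opNorm_def]
  refine ContinuousLinearMap.opNorm_le_bound _ (norm_nonneg M) fun x => ?_
  set a : EuclideanSpace ℝ (Fin n) := (WithLp.equiv 2 _).symm (fun i => (x i).re) with ha
  set b : EuclideanSpace ℝ (Fin n) := (WithLp.equiv 2 _).symm (fun i => (x i).im) with hb
  show ‖(Matrix.toEuclideanLin (M.map (algebraMap ℝ ℂ)) x : EuclideanSpace ℂ (Fin m))‖ ≤ ‖M‖ * ‖x‖
  set y : EuclideanSpace ℂ (Fin m) := Matrix.toEuclideanLin (M.map (algebraMap ℝ ℂ)) x with hy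
  have hre : ∀ i, (y i).re = (M *ᵥ a) i := by
    intro i
    simp [hy, Matrix.toEuclideanLin_apply, Matrix.mulVec, dotProduct, Complex.re_sum,
      Matrix.map_apply, ha]
  have him : ∀ i, (y i).im = (M *ᵥ b) i := by
    intro i
    simp [hy, Matrix.toEuclideanLin_apply, Matrix.mulVec, dotProduct, Complex.im_sum,
      Matrix.map_apply, hb]
  have hnormsq : ∀ z : ℂ, ‖z‖^2 = z.re^2 + z.im^2 := fun z => by
    rw [Complex.sq_norm, Complex.normSq_apply]; ring
  set Ma : EuclideanSpace ℝ (Fin m) := ((WithLp.equiv 2 (Fin m → ℝ)).symm) (M *ᵥ a) with hMa'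
  set Mb : EuclideanSpace ℝ (Fin m) := ((WithLp.equiv 2 (Fin m → ℝ)).symm) (M *ᵥ b) with hMb'
  have hMa : ‖Ma‖ ≤ ‖M‖ * ‖a‖ := Matrix.l2_opNorm_mulVec M a
  have hMb : ‖Mb‖ ≤ ‖M‖ * ‖b‖ := Matrix.l2_opNorm_mulVec M b
  have hy2 : ‖y‖^2 = ‖Ma‖^2 + ‖Mb‖^2 := by
    rw [EuclideanSpace.norm_eq, Real.sq_sqrt (by positivity),
      EuclideanSpace.norm_eq, Real.sq_sqrt (by positivity),
      EuclideanSpace.norm_eq, Real.sq_sqrt (by positivity), ← Finset.sum_add_distrib]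
    refine Finset.sum_congr rfl fun i _ => ?_
    rw [hnormsq, hre, him]
    simp [hMa', hMb', Real.norm_eq_abs, sq_abs]
  have hx2 : ‖x‖^2 = ‖a‖^2 + ‖b‖^2 := by
    rw [EuclideanSpace.norm_eq, Real.sq_sqrt (by positivity),
      EuclideanSpace.norm_eq, Real.sq_sqrt (by positivity),
      EuclideanSpace.norm_eq, Real.sq_sqrt (by positivity), ← Finset.sum_add_distrib]
    refine Finset.sum_congr rfl fun i _ => ?_
    rw [hnormsq]
    simp [ha, hb, Real.norm_eq_abs, sq_abs]
  have h2 : ‖y‖^2 ≤ (‖M‖ * ‖x‖)^2 := by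
    rw [hy2]
    have h1 : ‖Ma‖^2 ≤ (‖M‖*‖a‖)^2 := pow_le_pow_left₀ (norm_nonneg _) hMa 2
    have h2 : ‖Mb‖^2 ≤ (‖M‖*‖b‖)^2 := pow_le_pow_left₀ (norm_nonneg _) hMb 2
    have h3 : ‖M‖^2 * ‖x‖^2 = ‖M‖^2*‖a‖^2 + ‖M‖^2*‖b‖^2 := by rw [hx2]; ring
    nlinarith [h1, h2, h3]
  exact (pow_le_pow_iff_left₀ (norm_nonneg _) (by positivity) two_ne_zero).mp h2

set_option maxHeartbeats 2000000 in
/-- if `M_X = V·T·V⁻¹` and `μ` is an eigenvalue of `Mᵉ` that is not an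
eigenvalue of `M_X`, then `μI − T` (as a complex matrix) is invertible and
`‖(μI − T)⁻¹‖⁻¹ ≤ cond(V)·‖M_X − Mᵉ‖`; equivalently
`1 ≤ ‖(μI − T)⁻¹‖·cond(V)·‖M_X − Mᵉ‖`. -/
theorem stmt8 {N : ℕ} (MX V T Mε : Matrix (Fin N) (Fin N) ℝ)
    (hV : IsUnit V) (hfact : MX = V * T * V⁻¹)
    (μ : ℂ) (hμ : μ ∈ specC Mε) (hμnot : μ ∉ specC MX) :
    IsUnit (μ • (1 : Matrix (Fin N) (Fin N) ℂ) - T.map (algebraMap ℝ ℂ)) ∧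
    ‖(μ • (1 : Matrix (Fin N) (Fin N) ℂ) - T.map (algebraMap ℝ ℂ))⁻¹‖⁻¹ ≤
      (‖V‖ * ‖V⁻¹‖) * ‖MX - Mε‖ ∧
    1 ≤ ‖(μ • (1 : Matrix (Fin N) (Fin N) ℂ) - T.map (algebraMap ℝ ℂ))⁻¹‖ *
      ((‖V‖ * ‖V⁻¹‖) * ‖MX - Mε‖) := by
  classical
  set f := algebraMap ℝ ℂ
  set Ac := MX.map f with hAc
  set Ec := Mε.map f with hEc
  set Vc := V.map f with hVc
  set Tc := T.map f with hTc
  set W := μ • (1 : Matrix (Fin N) (Fin N) ℂ) - Tc with hW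
  set S := μ • (1 : Matrix (Fin N) (Fin N) ℂ) - Ac with hS
  -- determinant facts
  have hdetV : IsUnit V.det := (Matrix.isUnit_iff_isUnit_det V).mp hV
  have hdetVc : Vc.det ≠ 0 := by
    rw [hVc, ← RingHom.mapMatrix_apply, ← RingHom.map_det]
    simpa using hdetV.ne_zero
  have hVcunit : IsUnit Vc := (Matrix.isUnit_iff_isUnit_det Vc).mpr (isUnit_iff_ne_zero.mpr hdetVc)
  have hVVc : Vc * (V⁻¹).map f = 1 := by
    rw [hVc, ← Matrix.map_mul, Matrix.mul_nonsing_inv V hdetV]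
    simp
  have hinvmap : Vc⁻¹ = (V⁻¹).map f := Matrix.inv_eq_right_inv hVVc
  have hVcVinv : Vc * Vc⁻¹ = 1 := by rw [hinvmap]; exact hVVc
  -- factorization of S
  have hAcfact : Ac = Vc * Tc * Vc⁻¹ := by
    rw [hAc, hfact, Matrix.map_mul, Matrix.map_mul, hinvmap, hVc, hTc]
  have hSfact : S = Vc * W * Vc⁻¹ := by
    rw [hS, hW, hAcfact]
    symm
    rw [Matrix.mul_sub, Matrix.sub_mul]
    congr 1
    rw [mul_smul_comm, mul_one, smul_mul_assoc, hVcVinv]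
  -- S invertible (μ not eigenvalue of MX)
  have hdetS : S.det ≠ 0 := by
    intro h0
    apply hμnot
    rw [specC, Polynomial.mem_roots ((Ac.charpoly_monic).ne_zero)]
    rwa [Polynomial.IsRoot, eval_charpoly_aux]
  have hdetW : W.det ≠ 0 := by
    intro h0
    apply hdetS
    rw [hSfact, Matrix.det_mul, Matrix.det_mul, h0, mul_zero, zero_mul]
  have hWunit : IsUnit W := (Matrix.isUnit_iff_isUnit_det W).mpr (isUnit_iff_ne_zero.mpr hdetW)
  refine ⟨hWunit, ?_⟩
  -- eigenvector of Mε
  have hdetE : (μ • (1 : Matrix (Fin N) (Fin N) ℂ) - Ec).det = 0 := by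
    rw [specC, Polynomial.mem_roots ((Ec.charpoly_monic).ne_zero)] at hμ
    rw [← eval_charpoly_aux]
    exact hμ
  obtain ⟨v, hv0, hv⟩ := (Matrix.exists_mulVec_eq_zero_iff).mpr hdetE
  -- S *ᵥ v = (Ec - Ac) *ᵥ v
  have hSv : S *ᵥ v = (Ec - Ac) *ᵥ v := by
    have h1 : μ • v - Ec *ᵥ v = 0 := by
      rw [← hv, Matrix.sub_mulVec, Matrix.smul_mulVec, Matrix.one_mulVec]
    rw [hS, Matrix.sub_mulVec, Matrix.smul_mulVec, Matrix.one_mulVec, Matrix.sub_mulVec]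
    have h2 : μ • v = Ec *ᵥ v := by rwa [sub_eq_zero] at h1
    rw [h2]
  set B := S⁻¹ * (Ec - Ac) with hB
  have hvB : B *ᵥ v = v := by
    rw [hB, ← Matrix.mulVec_mulVec, ← hSv, Matrix.mulVec_mulVec,
      Matrix.nonsing_inv_mul S (isUnit_iff_ne_zero.mpr hdetS), Matrix.one_mulVec]
  -- 1 ≤ ‖B‖
  set ev : EuclideanSpace ℂ (Fin N) := (WithLp.equiv 2 (Fin N → ℂ)).symm v with hev
  have hevne : ‖ev‖ ≠ 0 := by
    simp only [norm_ne_zero_iff]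
    intro h
    exact hv0 (congrArg (WithLp.equiv 2 (Fin N → ℂ)) h)
  have hevpos : 0 < ‖ev‖ := lt_of_le_of_ne (norm_nonneg _) (Ne.symm hevne)
  have h1B : ‖ev‖ ≤ ‖B‖ * ‖ev‖ := by
    have h := Matrix.l2_opNorm_mulVec B ev
    have heq : (EuclideanSpace.equiv (Fin N) ℂ).symm (B *ᵥ ev) = ev :=
      congrArg (EuclideanSpace.equiv (Fin N) ℂ).symm hvB
    rwa [heq] at h
  have hone : 1 ≤ ‖B‖ := (le_mul_iff_one_le_left hevpos).mp h1B
  -- norm bounds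
  have hSinv : S⁻¹ = Vc * (W⁻¹ * Vc⁻¹) := by
    rw [hSfact, Matrix.mul_inv_rev, Matrix.mul_inv_rev,
      Matrix.nonsing_inv_nonsing_inv Vc (isUnit_iff_ne_zero.mpr hdetVc), ← mul_assoc]
  have hnormV : ‖Vc‖ ≤ ‖V‖ := norm_map_le V
  have hnormVi : ‖Vc⁻¹‖ ≤ ‖V⁻¹‖ := by rw [hinvmap]; exact norm_map_le _
  have hnormE : ‖Ec - Ac‖ ≤ ‖MX - Mε‖ := by
    have : Ec - Ac = (Mε - MX).map f := by
      ext i j; simp [hEc, hAc, Matrix.sub_apply, Matrix.map_apply]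
    rw [this, ← norm_sub_rev]
    exact norm_map_le _
  have hBle : ‖B‖ ≤ ‖Vc‖ * (‖W⁻¹‖ * ‖Vc⁻¹‖) * ‖Ec - Ac‖ := by
    calc ‖B‖ ≤ ‖S⁻¹‖ * ‖Ec - Ac‖ := Matrix.l2_opNorm_mul _ _
      _ ≤ ‖Vc‖ * (‖W⁻¹‖ * ‖Vc⁻¹‖) * ‖Ec - Ac‖ := by
          apply mul_le_mul_of_nonneg_right _ (norm_nonneg _)
          rw [hSinv]
          calc ‖Vc * (W⁻¹ * Vc⁻¹)‖ ≤ ‖Vc‖ * ‖W⁻¹ * Vc⁻¹‖ := Matrix.l2_opNorm_mul _ _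
            _ ≤ ‖Vc‖ * (‖W⁻¹‖ * ‖Vc⁻¹‖) :=
                mul_le_mul_of_nonneg_left (Matrix.l2_opNorm_mul _ _) (norm_nonneg _)
  have hfinal : 1 ≤ ‖W⁻¹‖ * ((‖V‖ * ‖V⁻¹‖) * ‖MX - Mε‖) := by
    have c1 : ‖Vc‖ * (‖W⁻¹‖ * ‖Vc⁻¹‖) * ‖Ec - Ac‖ ≤ ‖V‖ * (‖W⁻¹‖ * ‖V⁻¹‖) * ‖MX - Mε‖ := by
      have h01 : (0:ℝ) ≤ ‖W⁻¹‖ := norm_nonneg _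
      have := mul_le_mul (mul_le_mul hnormV (mul_le_mul_of_nonneg_left hnormVi h01)
        (by positivity) (norm_nonneg V)) hnormE (norm_nonneg _) (by positivity)
      exact this
    have := le_trans hone (le_trans hBle c1)
    nlinarith [this]
  refine ⟨?_, hfinal⟩
  have hWpos : 0 < ‖W⁻¹‖ := by
    rcases lt_or_eq_of_le (norm_nonneg W⁻¹) with h | h
    · exact h
    · exfalso; rw [← h, zero_mul] at hfinal; linarith
  rw [← one_div, div_le_iff₀ hWpos]
  nlinarith [hfinal]
end

section
/- Let Λ = diag(λ₁,…,λ_M) and Θ = diag(θ₁,…,θ_{N−M}) be real diagonal matrices with γ := min_j θ_j − max_i λ_i > 0, and let R be an M×(N−M) real matrix. Then the matrix X with entries X_{ij} = R_{ij}/(θ_j − λ_i) is the unique solution of the Sylvester equation −Λ·X + X·Θ = R, and its ℓ² operator norm satisfies ‖X‖ ≤ ‖R‖/γ. -/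
open Matrix
open scoped Matrix.Norms.L2Operator

lemma diag_l2_norm_le {m : Type*} [Fintype m] [DecidableEq m] (d : m → ℝ) (c : ℝ) (hc : 0 ≤ c)
    (hd : ∀ i, |d i| ≤ c) : ‖(Matrix.diagonal d : Matrix m m ℝ)‖ ≤ c := by
  rw [Matrix.l2_opNorm_def]
  refine ContinuousLinearMap.opNorm_le_bound _ hc fun x => ?_
  have hval : ((Matrix.toEuclideanLin.trans LinearMap.toContinuousLinearMap)
      (Matrix.diagonal d)) x = Matrix.toEuclideanLin (Matrix.diagonal d) x := rfl
  rw [hval, Matrix.toEuclideanLin_apply]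
  rw [EuclideanSpace.norm_eq, EuclideanSpace.norm_eq]
  rw [← Real.sqrt_sq hc, ← Real.sqrt_mul (by positivity)]
  apply Real.sqrt_le_sqrt
  rw [Finset.mul_sum]
  apply Finset.sum_le_sum
  intro i _
  have : (Matrix.diagonal d *ᵥ (WithLp.equiv 2 (m → ℝ)) x) i = d i * x i := by
    simp [Matrix.mulVec_diagonal]
  rw [WithLp.ofLp_toLp, show (Matrix.diagonal d *ᵥ x.ofLp) i = d i * x i from this]
  have h1 : |d i * x i| ≤ c * |x i| := by
    rw [abs_mul]
    exact mul_le_mul_of_nonneg_right (hd i) (abs_nonneg _)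
  have hnx : ‖x i‖ = |x i| := rfl
  calc ‖d i * x i‖ ^ 2 = |d i * x i|^2 := by rw [Real.norm_eq_abs]
    _ ≤ (c * |x i|)^2 := by nlinarith [abs_nonneg (d i * x i), abs_nonneg (x i)]
    _ = c^2 * ‖x i‖^2 := by rw [hnx]; ring

set_option maxHeartbeats 1000000 in
/-- with `Λ = diag(λ)` and `Θ = diag(θ)` real diagonal matrices whose
separation `γ := min_j θ_j − max_i λ_i` is positive, the matrix `X` with entries
`X_{ij} = R_{ij}/(θ_j − λ_i)` is the unique solution of `−Λ·X + X·Θ = R`, and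
`‖X‖ ≤ ‖R‖/γ`. -/
theorem stmt11 {N M : ℕ} (hM : 0 < M) (hMN : M < N)
    (lam : Fin M → ℝ) (θ : Fin (N - M) → ℝ)
    (R : Matrix (Fin M) (Fin (N - M)) ℝ)
    (γ : ℝ)
    (hγ : γ = Finset.univ.inf' ⟨⟨0, Nat.sub_pos_of_lt hMN⟩, Finset.mem_univ _⟩ θ -
        Finset.univ.sup' ⟨⟨0, hM⟩, Finset.mem_univ _⟩ lam)
    (hγpos : 0 < γ) :
    (-(Matrix.diagonal lam * Matrix.of fun i j => R i j / (θ j - lam i)) +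
      (Matrix.of fun i j => R i j / (θ j - lam i)) * Matrix.diagonal θ = R) ∧
    (∀ Y : Matrix (Fin M) (Fin (N - M)) ℝ,
      -(Matrix.diagonal lam * Y) + Y * Matrix.diagonal θ = R →
      Y = Matrix.of fun i j => R i j / (θ j - lam i)) ∧
    ‖(Matrix.of fun i j => R i j / (θ j - lam i) :
        Matrix (Fin M) (Fin (N - M)) ℝ)‖ ≤ ‖R‖ / γ := by
  set a : ℝ := Finset.univ.sup' ⟨⟨0, hM⟩, Finset.mem_univ _⟩ lam with ha
  have hkey : ∀ (i : Fin M) (j : Fin (N - M)), γ ≤ θ j - lam i := by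
    intro i j
    have h1 : lam i ≤ a := Finset.le_sup' lam (Finset.mem_univ i)
    have h2 : Finset.univ.inf' ⟨⟨0, Nat.sub_pos_of_lt hMN⟩, Finset.mem_univ _⟩ θ ≤ θ j :=
      Finset.inf'_le θ (Finset.mem_univ j)
    rw [hγ]; linarith
  have hpos : ∀ (i : Fin M) (j : Fin (N - M)), 0 < θ j - lam i :=
    fun i j => lt_of_lt_of_le hγpos (hkey i j)
  have hne : ∀ (i : Fin M) (j : Fin (N - M)), θ j - lam i ≠ 0 :=
    fun i j => ne_of_gt (hpos i j)
  set X : Matrix (Fin M) (Fin (N - M)) ℝ := Matrix.of fun i j => R i j / (θ j - lam i) with hX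
  have heq : -(Matrix.diagonal lam * X) + X * Matrix.diagonal θ = R := by
    ext i j
    simp only [Matrix.add_apply, Matrix.neg_apply, Matrix.diagonal_mul, Matrix.mul_diagonal,
      Matrix.of_apply, hX]
    have h : θ j - lam i ≠ 0 := hne i j
    field_simp
    ring
  refine ⟨heq, ?_, ?_⟩
  · intro Y hY
    ext i j
    have h : (-(Matrix.diagonal lam * Y) + Y * Matrix.diagonal θ) i j = R i j := by rw [hY]
    simp only [Matrix.add_apply, Matrix.neg_apply, Matrix.diagonal_mul, Matrix.mul_diagonal] at h
    show Y i j = R i j / (θ j - lam i)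
    rw [eq_div_iff (hne i j)]
    linear_combination h
  · -- norm bound
    -- choose s
    set m0 : ℝ := Finset.univ.sup' ⟨⟨0, hM⟩, Finset.mem_univ _⟩ (fun i => a - lam i) with hm0
    have hm0nonneg : 0 ≤ m0 := by
      have h1 : a - lam ⟨0, hM⟩ ≤ m0 :=
        Finset.le_sup' (fun i => a - lam i) (Finset.mem_univ (⟨0, hM⟩ : Fin M))
      have h2 : lam ⟨0, hM⟩ ≤ a := Finset.le_sup' lam (Finset.mem_univ (⟨0, hM⟩ : Fin M))
      linarith
    set s : ℝ := (1 + m0)⁻¹ with hs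
    have hspos : 0 < s := by rw [hs]; positivity
    set A : Matrix (Fin M) (Fin M) ℝ := Matrix.diagonal (fun i => 1 + s * (lam i - a)) with hA
    set D : Matrix (Fin (N - M)) (Fin (N - M)) ℝ :=
      Matrix.diagonal (fun j => (1 + s * (θ j - a))⁻¹) with hD
    have hdenpos : ∀ j, 0 < 1 + s * (θ j - a) := by
      intro j
      have h2 : Finset.univ.inf' ⟨⟨0, Nat.sub_pos_of_lt hMN⟩, Finset.mem_univ _⟩ θ ≤ θ j :=
        Finset.inf'_le θ (Finset.mem_univ j)
      have : γ ≤ θ j - a := by rw [hγ]; linarith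
      nlinarith
    have hγle : ∀ j, 1 + s * γ ≤ 1 + s * (θ j - a) := by
      intro j
      have h2 : Finset.univ.inf' ⟨⟨0, Nat.sub_pos_of_lt hMN⟩, Finset.mem_univ _⟩ θ ≤ θ j :=
        Finset.inf'_le θ (Finset.mem_univ j)
      have : γ ≤ θ j - a := by rw [hγ]; linarith
      nlinarith
    have hfix : X = (A * X + s • R) * D := by
      ext i j
      have hrhs : ((A * X + s • R) * D) i j =
          ((1 + s * (lam i - a)) * X i j + s * R i j) * (1 + s * (θ j - a))⁻¹ := by
        rw [hD, Matrix.mul_diagonal, Matrix.add_apply, Matrix.smul_apply, hA,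
          Matrix.diagonal_mul, smul_eq_mul]
      rw [hrhs]
      have hXij : X i j = R i j / (θ j - lam i) := rfl
      rw [hXij]
      have h1 : θ j - lam i ≠ 0 := hne i j
      have h2 : 1 + s * (θ j - a) ≠ 0 := ne_of_gt (hdenpos j)
      field_simp
      ring
    -- norm estimates
    have hAnorm : ‖A‖ ≤ 1 := by
      apply diag_l2_norm_le _ _ zero_le_one
      intro i
      have h1 : a - lam i ≤ m0 := Finset.le_sup' (fun i => a - lam i) (Finset.mem_univ i)
      have h2 : lam i ≤ a := Finset.le_sup' lam (Finset.mem_univ i)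
      rw [abs_le]
      constructor
      · have : s * (a - lam i) ≤ s * m0 := by
          apply mul_le_mul_of_nonneg_left h1 (le_of_lt hspos)
        have hsm : s * m0 ≤ 1 := by
          rw [hs]
          rw [inv_mul_le_iff₀ (by positivity)]
          linarith
        nlinarith
      · nlinarith
    have hDnorm : ‖D‖ ≤ (1 + s * γ)⁻¹ := by
      have hposγ : 0 < 1 + s * γ := by nlinarith
      apply diag_l2_norm_le _ _ (by positivity)
      intro j
      rw [abs_of_pos (inv_pos.mpr (hdenpos j))]
      exact inv_anti₀ hposγ (hγle j)
    have hXnorm : ‖X‖ ≤ (‖X‖ + s * ‖R‖) * (1 + s * γ)⁻¹ := by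
      calc ‖X‖ = ‖(A * X + s • R) * D‖ := by rw [← hfix]
        _ ≤ ‖A * X + s • R‖ * ‖D‖ := Matrix.l2_opNorm_mul _ _
        _ ≤ (‖A * X‖ + ‖s • R‖) * ‖D‖ := by
            apply mul_le_mul_of_nonneg_right (norm_add_le _ _) (norm_nonneg _)
        _ ≤ (‖A‖ * ‖X‖ + s * ‖R‖) * ‖D‖ := by
            apply mul_le_mul_of_nonneg_right _ (norm_nonneg _)
            gcongr
            · exact Matrix.l2_opNorm_mul _ _
            · rw [norm_smul, Real.norm_eq_abs, abs_of_pos hspos]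
        _ ≤ (‖X‖ + s * ‖R‖) * (1 + s * γ)⁻¹ := by
            have hposγ : 0 < 1 + s * γ := by nlinarith
            apply mul_le_mul
            · nlinarith [norm_nonneg X, mul_le_mul_of_nonneg_right hAnorm (norm_nonneg X)]
            · exact hDnorm
            · exact norm_nonneg _
            · positivity
    have hposγ : 0 < 1 + s * γ := by nlinarith
    have h2 : ‖X‖ * (1 + s * γ) ≤ ‖X‖ + s * ‖R‖ := by
      calc ‖X‖ * (1 + s * γ) ≤ ((‖X‖ + s * ‖R‖) * (1 + s * γ)⁻¹) * (1 + s * γ) :=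
            mul_le_mul_of_nonneg_right hXnorm (le_of_lt hposγ)
        _ = ‖X‖ + s * ‖R‖ := by field_simp
    rw [le_div_iff₀ hγpos]
    nlinarith [norm_nonneg (X : Matrix (Fin M) (Fin (N - M)) ℝ), norm_nonneg R, hspos]
end

section
/- (Abstract form of Theorem 4.4.) Let N > M ≥ 0 and suppose the N×N real matrix M_X has a factorization M_X = V · [[Λ, R],[0, Θ]] · V⁻¹, where V is an invertible N×N real matrix, Λ is an M×M real diagonal matrix, Θ is an (N−M)×(N−M) real diagonal matrix, R is an M×(N−M) real matrix, and the separation γ := (minimum diagonal entry of Θ) − (maximum diagonal entry of Λ) is positive. Then M_X is diagonalizable over ℝ, and for any N×N real matrix Mᵉ and any complex eigenvalue μ of Mᵉ, dist(μ, σ(M_X)) ≤ (1 + ‖R‖/γ)² · ‖V‖ · ‖V⁻¹‖ · ‖M_X − Mᵉ‖. -/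
open Matrix
open scoped Matrix.Norms.L2Operator

section Helpers

open Polynomial Real MeasureTheory Filter

variable {𝕜 : Type*} [RCLike 𝕜] {m n : Type*} [Fintype m] [Fintype n] [DecidableEq m]
  [DecidableEq n]

omit [DecidableEq m] in
lemma Matrix.l2_opNorm_le_bound' (A : Matrix m n 𝕜) {c : ℝ} (hc : 0 ≤ c)
    (h : ∀ v : n → 𝕜, ∑ i, ‖(A *ᵥ v) i‖^2 ≤ c^2 * ∑ j, ‖v j‖^2) : ‖A‖ ≤ c := by
  rw [Matrix.l2_opNorm_def]
  apply ContinuousLinearMap.opNorm_le_bound _ hc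
  intro x
  have hx : ((Matrix.toEuclideanLin.trans LinearMap.toContinuousLinearMap) A) x
      = (WithLp.equiv 2 _).symm (A *ᵥ (WithLp.equiv 2 _ x)) := rfl
  rw [hx, EuclideanSpace.norm_eq, EuclideanSpace.norm_eq]
  have h1 : Real.sqrt (∑ i, ‖((WithLp.equiv 2 _).symm (A *ᵥ (WithLp.equiv 2 _ x)) :
      EuclideanSpace 𝕜 m) i‖^2) ≤ Real.sqrt (c^2 * ∑ j, ‖x j‖^2) := by
    apply Real.sqrt_le_sqrt
    exact h (WithLp.equiv 2 _ x)
  refine h1.trans (le_of_eq ?_)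
  rw [Real.sqrt_mul (sq_nonneg c), Real.sqrt_sq hc]

omit [DecidableEq m] in
lemma Matrix.sq_sum_le_l2_opNorm (A : Matrix m n 𝕜) (v : n → 𝕜) :
    ∑ i, ‖(A *ᵥ v) i‖^2 ≤ ‖A‖^2 * ∑ j, ‖v j‖^2 := by
  have h := Matrix.l2_opNorm_mulVec A ((WithLp.equiv 2 _).symm v)
  rw [EuclideanSpace.norm_eq, EuclideanSpace.norm_eq] at h
  have h3 : (Real.sqrt (∑ i, ‖(A *ᵥ v) i‖^2))^2 ≤ (‖A‖ * Real.sqrt (∑ j, ‖v j‖^2))^2 :=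
    pow_le_pow_left₀ (Real.sqrt_nonneg _) h 2
  rwa [Real.sq_sqrt (by positivity), mul_pow, Real.sq_sqrt (by positivity)] at h3

omit [DecidableEq m] in
lemma Matrix.l2_opNorm_diagonal_le (d : n → 𝕜) {c : ℝ} (hc : 0 ≤ c) (h : ∀ i, ‖d i‖ ≤ c) :
    ‖(Matrix.diagonal d : Matrix n n 𝕜)‖ ≤ c := by
  apply Matrix.l2_opNorm_le_bound' _ hc
  intro v
  rw [Finset.mul_sum]
  apply Finset.sum_le_sum
  intro i _
  rw [Matrix.mulVec_diagonal, norm_mul, mul_pow]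
  exact mul_le_mul_of_nonneg_right (pow_le_pow_left₀ (norm_nonneg _) (h i) 2) (by positivity)

omit [DecidableEq m] in
lemma Matrix.l2_opNorm_one_le : ‖(1 : Matrix n n 𝕜)‖ ≤ 1 := by
  apply Matrix.l2_opNorm_le_bound' _ zero_le_one
  intro v
  simp [Matrix.one_mulVec]

omit [DecidableEq m] in
lemma Matrix.l2_opNorm_submatrix_le {l o : Type*} [Fintype l] [Fintype o] [DecidableEq o]
    (A : Matrix m n 𝕜) (e : l ≃ m) (f : o ≃ n) :
    ‖A.submatrix e f‖ ≤ ‖A‖ := by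
  apply Matrix.l2_opNorm_le_bound' _ (norm_nonneg _)
  intro v
  have key : ∀ i, (A.submatrix e f *ᵥ v) i = (A *ᵥ (v ∘ f.symm)) (e i) := by
    intro i
    simp only [Matrix.mulVec, dotProduct, Matrix.submatrix_apply, Function.comp]
    exact Fintype.sum_equiv f _ _ (fun j => by rw [Equiv.symm_apply_apply])
  calc ∑ i, ‖(A.submatrix e f *ᵥ v) i‖^2 = ∑ i, ‖(A *ᵥ (v ∘ f.symm)) (e i)‖^2 := by
        simp_rw [key]
    _ = ∑ i, ‖(A *ᵥ (v ∘ f.symm)) i‖^2 := Fintype.sum_equiv e _ _ (fun i => rfl)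
    _ ≤ ‖A‖^2 * ∑ j, ‖(v ∘ f.symm) j‖^2 := Matrix.sq_sum_le_l2_opNorm A _
    _ = ‖A‖^2 * ∑ j, ‖v j‖^2 := by
        congr 1
        exact Fintype.sum_equiv f.symm _ _ (fun j => rfl)

lemma Matrix.l2_opNorm_fromBlocks_offdiag_le (Y : Matrix m n 𝕜) :
    ‖(Matrix.fromBlocks 0 Y 0 0 : Matrix (m ⊕ n) (m ⊕ n) 𝕜)‖ ≤ ‖Y‖ := by
  apply Matrix.l2_opNorm_le_bound' _ (norm_nonneg _)
  intro v
  have key : (Matrix.fromBlocks 0 Y 0 0 : Matrix (m ⊕ n) (m ⊕ n) 𝕜) *ᵥ v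
      = Sum.elim (Y *ᵥ (v ∘ Sum.inr)) 0 := by
    have hv : v = Sum.elim (v ∘ Sum.inl) (v ∘ Sum.inr) := by
      ext (i | j) <;> rfl
    rw [hv, Matrix.fromBlocks_mulVec]
    simp
  rw [key]
  rw [Fintype.sum_sum_type, Fintype.sum_sum_type]
  simp only [Sum.elim_inl, Sum.elim_inr, Pi.zero_apply, norm_zero]
  have h2 := Matrix.sq_sum_le_l2_opNorm Y (v ∘ Sum.inr)
  have h3 : (0:ℝ) ≤ ‖Y‖^2 * ∑ i, ‖v (Sum.inl i)‖^2 := by positivity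
  calc (∑ i, ‖(Y *ᵥ (v ∘ Sum.inr)) i‖^2) + ∑ j, ((0:ℝ)^2)
      = ∑ i, ‖(Y *ᵥ (v ∘ Sum.inr)) i‖^2 := by simp
    _ ≤ ‖Y‖^2 * ∑ j, ‖v (Sum.inr j)‖^2 := h2
    _ ≤ ‖Y‖^2 * ∑ i, ‖v (Sum.inl i)‖^2 + ‖Y‖^2 * ∑ j, ‖v (Sum.inr j)‖^2 := le_add_of_nonneg_left h3
    _ = ‖Y‖^2 * (∑ i, ‖v (Sum.inl i)‖^2 + ∑ j, ‖v (Sum.inr j)‖^2) := by ring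

omit [DecidableEq m] in
lemma Matrix.l2_opNorm_map_complex_le (A : Matrix m n ℝ) :
    ‖A.map (algebraMap ℝ ℂ)‖ ≤ ‖A‖ := by
  apply Matrix.l2_opNorm_le_bound' _ (norm_nonneg _)
  intro v
  have hre : ∀ i, ((A.map (algebraMap ℝ ℂ) *ᵥ v) i).re = (A *ᵥ (fun j => (v j).re)) i := by
    intro i
    simp only [Matrix.mulVec, dotProduct, Matrix.map_apply, Complex.re_sum]
    congr 1; ext j
    simp [Complex.mul_re]
  have him : ∀ i, ((A.map (algebraMap ℝ ℂ) *ᵥ v) i).im = (A *ᵥ (fun j => (v j).im)) i := by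
    intro i
    simp only [Matrix.mulVec, dotProduct, Matrix.map_apply, Complex.im_sum]
    congr 1; ext j
    simp [Complex.mul_im]
  have habs : ∀ z : ℂ, ‖z‖^2 = z.re^2 + z.im^2 := by
    intro z
    rw [Complex.sq_norm, Complex.normSq_apply]
    ring
  calc ∑ i, ‖(A.map (algebraMap ℝ ℂ) *ᵥ v) i‖^2
      = (∑ i, ‖(A *ᵥ (fun j => (v j).re)) i‖^2) + ∑ i, ‖(A *ᵥ (fun j => (v j).im)) i‖^2 := by
        rw [← Finset.sum_add_distrib]
        refine Finset.sum_congr rfl fun i _ => ?_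
        rw [habs, hre, him, Real.norm_eq_abs, Real.norm_eq_abs, sq_abs, sq_abs]
    _ ≤ ‖A‖^2 * (∑ j, ‖(v j).re‖^2) + ‖A‖^2 * (∑ j, ‖(v j).im‖^2) :=
        add_le_add (Matrix.sq_sum_le_l2_opNorm A _) (Matrix.sq_sum_le_l2_opNorm A _)
    _ = ‖A‖^2 * ∑ j, ‖v j‖^2 := by
        rw [← mul_add]
        congr 1
        rw [← Finset.sum_add_distrib]
        refine Finset.sum_congr rfl fun j _ => ?_
        rw [habs, Real.norm_eq_abs, Real.norm_eq_abs, sq_abs, sq_abs]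

lemma my_eval_charpoly {n : Type*} [Fintype n] [DecidableEq n] {F : Type*} [Field F]
    (A : Matrix n n F) (μ : F) :
    A.charpoly.eval μ = (Matrix.diagonal (fun _ => μ) - A).det := by
  rw [Matrix.charpoly, ← Polynomial.coe_evalRingHom, RingHom.map_det]
  congr 1
  ext i j
  by_cases h : i = j
  · subst h; simp [Matrix.charmatrix_apply_eq]
  · simp [Matrix.charmatrix_apply_ne _ _ _ h, Matrix.diagonal_apply_ne _ h]

lemma my_charpoly_diagonal {n : Type*} [Fintype n] [DecidableEq n] {F : Type*} [Field F]
    (d : n → F) :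
    (Matrix.diagonal d).charpoly = ∏ i, (X - C (d i)) := by
  rw [Matrix.charpoly]
  have h : Matrix.charmatrix (Matrix.diagonal d) = Matrix.diagonal (fun i => X - C (d i)) := by
    ext i j
    by_cases h : i = j
    · subst h; simp [Matrix.charmatrix_apply_eq]
    · simp [Matrix.charmatrix_apply_ne _ _ _ h, Matrix.diagonal_apply_ne _ h]
  rw [h, Matrix.det_diagonal]

lemma my_roots_charpoly_diagonal {n : Type*} [Fintype n] [DecidableEq n] {F : Type*} [Field F]
    (d : n → F) :
    (Matrix.diagonal d).charpoly.roots = Finset.univ.val.map d := by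
  rw [my_charpoly_diagonal]
  have h : (∏ i, (X - C (d i))) = ((Finset.univ.val.map d).map (fun a => X - C a)).prod := by
    rw [Multiset.map_map]
    rfl
  rw [h, Polynomial.roots_multiset_prod_X_sub_C]

lemma my_charpoly_conj {n : Type*} [Fintype n] [DecidableEq n] {F : Type*} [Field F]
    (U A W : Matrix n n F) (hUW : U * W = 1) :
    (U * A * W).charpoly = A.charpoly := by
  have hmapUW : U.map C * W.map C = 1 := by
    rw [← Matrix.map_mul, hUW, Matrix.map_one _ (map_zero C) (map_one C)]
  have key : Matrix.charmatrix (U * A * W) = U.map C * Matrix.charmatrix A * W.map C := by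
    rw [Matrix.charmatrix, Matrix.charmatrix, Matrix.mul_sub, Matrix.sub_mul]
    congr 1
    · rw [Matrix.mul_assoc, (Matrix.scalar_commute X (fun r => Commute.all X r) (W.map C)).eq,
        ← Matrix.mul_assoc, hmapUW, one_mul]
    · simp only [RingHom.mapMatrix_apply, Matrix.map_mul]
  rw [Matrix.charpoly, Matrix.charpoly, key, Matrix.det_mul, Matrix.det_mul]
  have hdet : (U.map C).det * (W.map C).det = 1 := by
    rw [← Matrix.det_mul, hmapUW, Matrix.det_one]
  calc (U.map C).det * (Matrix.charmatrix A).det * (W.map C).det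
      = ((U.map C).det * (W.map C).det) * (Matrix.charmatrix A).det := by ring
    _ = (Matrix.charmatrix A).det := by rw [hdet, one_mul]

lemma my_bauer_fike {n : Type*} [Fintype n] [DecidableEq n] [Nonempty n]
    (A E U W : Matrix n n ℂ) (dc : n → ℂ)
    (hUW : U * W = 1) (hWU : W * U = 1) (hA : A = U * Matrix.diagonal dc * W)
    (μ : ℂ) (hμ : μ ∈ E.charpoly.roots) :
    ∃ i, ‖μ - dc i‖ ≤ ‖U‖ * ‖W‖ * ‖A - E‖ := by
  by_cases hex : ∃ i, μ = dc i
  · obtain ⟨i, hi⟩ := hex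
    refine ⟨i, ?_⟩
    rw [hi, sub_self, norm_zero]
    positivity
  push_neg at hex
  obtain ⟨i₀, -, hi₀⟩ := Finset.exists_min_image Finset.univ (fun i => ‖μ - dc i‖)
    ⟨Classical.arbitrary n, Finset.mem_univ _⟩
  set δ := ‖μ - dc i₀‖ with hδdef
  have hδpos : 0 < δ := by
    rw [hδdef]
    apply norm_pos_iff.2
    exact sub_ne_zero_of_ne (hex i₀)
  refine ⟨i₀, ?_⟩
  have heval : E.charpoly.eval μ = 0 := Polynomial.isRoot_of_mem_roots hμ
  rw [my_eval_charpoly] at heval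
  obtain ⟨v, hv0, hv⟩ := (Matrix.exists_mulVec_eq_zero_iff).2 heval
  set J := Matrix.diagonal (fun i => μ - dc i) with hJ
  set Ji := Matrix.diagonal (fun i => (μ - dc i)⁻¹) with hJi
  have hJJi : J * Ji = 1 := by
    rw [hJ, hJi, Matrix.diagonal_mul_diagonal]
    have hfun : (fun i => (μ - dc i) * (μ - dc i)⁻¹) = (fun _ : n => (1:ℂ)) :=
      funext fun i => mul_inv_cancel₀ (sub_ne_zero_of_ne (hex i))
    rw [hfun, Matrix.diagonal_one]
  have hJiJ : Ji * J = 1 := by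
    rw [hJi, hJ, Matrix.diagonal_mul_diagonal]
    have hfun : (fun i => (μ - dc i)⁻¹ * (μ - dc i)) = (fun _ : n => (1:ℂ)) :=
      funext fun i => inv_mul_cancel₀ (sub_ne_zero_of_ne (hex i))
    rw [hfun, Matrix.diagonal_one]
  have hGA : Matrix.diagonal (fun _ => μ) - A = U * J * W := by
    have h1 : Matrix.diagonal (fun _ : n => μ) = U * Matrix.diagonal (fun _ : n => μ) * W := by
      have h2 : Matrix.diagonal (fun _ : n => μ) = μ • (1 : Matrix n n ℂ) := by
        rw [Matrix.smul_one_eq_diagonal]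
      rw [h2, Matrix.mul_smul, Matrix.smul_mul, Matrix.mul_one, hUW]
    rw [hA, hJ]
    calc Matrix.diagonal (fun _ : n => μ) - U * Matrix.diagonal dc * W
        = U * Matrix.diagonal (fun _ : n => μ) * W - U * Matrix.diagonal dc * W := by rw [← h1]
      _ = U * (Matrix.diagonal (fun _ : n => μ) - Matrix.diagonal dc) * W := by
          rw [Matrix.mul_sub, Matrix.sub_mul]
      _ = U * Matrix.diagonal (fun i => μ - dc i) * W := by
          rw [Matrix.diagonal_sub]
  have hres : (U * Ji * W) * (Matrix.diagonal (fun _ => μ) - A) = 1 := by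
    rw [hGA]
    calc (U * Ji * W) * (U * J * W) = U * Ji * (W * U) * J * W := by
          simp only [Matrix.mul_assoc]
      _ = U * (Ji * J) * W := by rw [hWU]; simp only [Matrix.mul_assoc, Matrix.one_mul]
      _ = 1 := by rw [hJiJ, Matrix.mul_one, hUW]
  have hmv : (Matrix.diagonal (fun _ => μ) - A) *ᵥ v = (E - A) *ᵥ v := by
    have h3 : (Matrix.diagonal (fun _ => μ) - A) = (Matrix.diagonal (fun _ => μ) - E) + (E - A) :=
      (sub_add_sub_cancel _ _ _).symm
    rw [h3, Matrix.add_mulVec, hv, zero_add]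
  have hvB : v = ((U * Ji * W) * (E - A)) *ᵥ v := by
    calc v = (1 : Matrix n n ℂ) *ᵥ v := (Matrix.one_mulVec v).symm
      _ = ((U * Ji * W) * (Matrix.diagonal (fun _ => μ) - A)) *ᵥ v := by rw [hres]
      _ = (U * Ji * W) *ᵥ ((Matrix.diagonal (fun _ => μ) - A) *ᵥ v) := by
          rw [Matrix.mulVec_mulVec]
      _ = (U * Ji * W) *ᵥ ((E - A) *ᵥ v) := by rw [hmv]
      _ = ((U * Ji * W) * (E - A)) *ᵥ v := by rw [Matrix.mulVec_mulVec]
  set B := (U * Ji * W) * (E - A) with hB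
  set ve : EuclideanSpace ℂ n := (WithLp.equiv 2 _).symm v with hve
  have hvepos : 0 < ‖ve‖ := by
    rw [norm_pos_iff]
    intro hcontra
    apply hv0
    ext i
    exact congrFun (congrArg (WithLp.equiv 2 _) hcontra) i
  have hnv : ‖ve‖ ≤ ‖B‖ * ‖ve‖ := by
    have h := Matrix.l2_opNorm_mulVec B ve
    have he : (EuclideanSpace.equiv n ℂ).symm (B *ᵥ ve) = ve := by
      ext i
      show (B *ᵥ v) i = v i
      exact (congrFun hvB i).symm
    rwa [he] at h
  have hB1 : 1 ≤ ‖B‖ := by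
    by_contra hcon
    push_neg at hcon
    nlinarith
  have hJinorm : ‖Ji‖ ≤ δ⁻¹ := by
    apply Matrix.l2_opNorm_diagonal_le _ (by positivity)
    intro i
    rw [norm_inv]
    exact inv_anti₀ hδpos (hi₀ i (Finset.mem_univ i))
  have hBle : ‖B‖ ≤ ‖U‖ * δ⁻¹ * ‖W‖ * ‖A - E‖ := by
    calc ‖B‖ ≤ ‖U * Ji * W‖ * ‖E - A‖ := Matrix.l2_opNorm_mul _ _
      _ ≤ (‖U * Ji‖ * ‖W‖) * ‖E - A‖ := by
          apply mul_le_mul_of_nonneg_right (Matrix.l2_opNorm_mul _ _) (norm_nonneg _)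
      _ ≤ ((‖U‖ * ‖Ji‖) * ‖W‖) * ‖E - A‖ := by
          apply mul_le_mul_of_nonneg_right
            (mul_le_mul_of_nonneg_right (Matrix.l2_opNorm_mul _ _) (norm_nonneg _)) (norm_nonneg _)
      _ ≤ ((‖U‖ * δ⁻¹) * ‖W‖) * ‖E - A‖ := by
          apply mul_le_mul_of_nonneg_right
            (mul_le_mul_of_nonneg_right
              (mul_le_mul_of_nonneg_left hJinorm (norm_nonneg _)) (norm_nonneg _)) (norm_nonneg _)
      _ = ‖U‖ * δ⁻¹ * ‖W‖ * ‖A - E‖ := by rw [norm_sub_rev]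
  have hone : 1 ≤ ‖U‖ * δ⁻¹ * ‖W‖ * ‖A - E‖ := le_trans hB1 hBle
  have h := mul_le_mul_of_nonneg_left hone (le_of_lt hδpos)
  rw [mul_one] at h
  calc δ ≤ δ * (‖U‖ * δ⁻¹ * ‖W‖ * ‖A - E‖) := h
    _ = (δ * δ⁻¹) * (‖U‖ * ‖W‖ * ‖A - E‖) := by ring
    _ = ‖U‖ * ‖W‖ * ‖A - E‖ := by rw [mul_inv_cancel₀ (ne_of_gt hδpos), one_mul]

lemma my_integral_exp_neg_mul {b : ℝ} (hb : 0 < b) :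
    ∫ t in Set.Ioi (0:ℝ), Real.exp (-(b * t)) = b⁻¹ := by
  have hderiv : ∀ x ∈ Set.Ioi (0:ℝ),
      HasDerivAt (fun t => -b⁻¹ * Real.exp (-(b * t))) (Real.exp (-(b * x))) x := by
    intro x _
    have h1 : HasDerivAt (fun t : ℝ => -(b * t)) (-b) x := by
      simpa using ((hasDerivAt_id x).const_mul b).fun_neg
    have h2 := (h1.exp).const_mul (-b⁻¹)
    have he : Real.exp (-(b * x)) = -b⁻¹ * (Real.exp (-(b * x)) * -b) := by
      rw [mul_neg, neg_mul_neg, mul_left_comm, inv_mul_cancel₀ hb.ne', mul_one]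
    rw [he]
    exact h2
  have hint : IntegrableOn (fun t => Real.exp (-(b * t))) (Set.Ioi (0:ℝ)) := by
    have h := exp_neg_integrableOn_Ioi 0 hb
    simpa [neg_mul] using h
  have htend : Tendsto (fun t => -b⁻¹ * Real.exp (-(b * t))) atTop (nhds 0) := by
    have h1 : Tendsto (fun t : ℝ => b * t) atTop atTop :=
      Tendsto.const_mul_atTop hb tendsto_id
    have h2 : Tendsto (fun t : ℝ => -(b * t)) atTop atBot :=
      Filter.tendsto_neg_atTop_atBot.comp h1
    have h3 : Tendsto (fun t : ℝ => Real.exp (-(b * t))) atTop (nhds 0) :=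
      Real.tendsto_exp_atBot.comp h2
    have h4 := h3.const_mul (-b⁻¹)
    simpa using h4
  have hcont : ContinuousWithinAt (fun t => -b⁻¹ * Real.exp (-(b * t))) (Set.Ici (0:ℝ)) 0 := by
    apply Continuous.continuousWithinAt
    exact continuous_const.mul (Real.continuous_exp.comp ((continuous_const.mul continuous_id).neg))
  have h := MeasureTheory.integral_Ioi_of_hasDerivAt_of_tendsto hcont hderiv hint htend
  rw [h]
  simp [Real.exp_zero]

lemma my_norm_Y_le (R : Matrix m n ℝ) (lam : m → ℝ) (θ : n → ℝ) (γ α β : ℝ) (hγpos : 0 < γ)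
    (hα : ∀ i, lam i ≤ α) (hβ : ∀ j, β ≤ θ j) (hγ : γ = β - α) :
    ‖(Matrix.of fun i j => R i j / (θ j - lam i) : Matrix m n ℝ)‖ ≤ ‖R‖ / γ := by
  have hb : ∀ i j, 0 < θ j - lam i := fun i j => by
    have := hα i; have := hβ j; linarith
  set F : ℝ → Matrix m n ℝ := fun t =>
    Matrix.diagonal (fun i => Real.exp (t * lam i)) * R *
      Matrix.diagonal (fun j => Real.exp (-(t * θ j))) with hF
  have hFentry : ∀ t i j, F t i j = R i j * Real.exp (-((θ j - lam i) * t)) := by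
    intro t i j
    simp only [hF]
    rw [Matrix.mul_diagonal, Matrix.diagonal_mul, mul_assoc, mul_comm (Real.exp (t * lam i)),
      mul_assoc, ← Real.exp_add]
    congr 2
    ring
  have hFsum : ∀ t, F t = ∑ i, ∑ j,
      (R i j * Real.exp (-((θ j - lam i) * t))) • Matrix.single i j (1:ℝ) := by
    intro t
    conv_lhs => rw [Matrix.matrix_eq_sum_single (F t)]
    refine Finset.sum_congr rfl fun i _ => Finset.sum_congr rfl fun j _ => ?_
    rw [Matrix.smul_single, smul_eq_mul, mul_one, hFentry]
  have hcoeff_int : ∀ (i : m) (j : n),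
      IntegrableOn (fun t => R i j * Real.exp (-((θ j - lam i) * t))) (Set.Ioi (0:ℝ)) := by
    intro i j
    have h1 := exp_neg_integrableOn_Ioi 0 (hb i j)
    have h2 : (fun t => R i j * Real.exp (-((θ j - lam i) * t)))
        = fun t => R i j * Real.exp (-(θ j - lam i) * t) := by
      funext t; rw [neg_mul]
    rw [h2]
    exact h1.const_mul _
  have hYint : (∫ t in Set.Ioi (0:ℝ), F t)
      = (Matrix.of fun i j => R i j / (θ j - lam i) : Matrix m n ℝ) := by
    rw [funext hFsum]
    rw [integral_finset_sum _ (fun i _ => integrable_finset_sum _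
      (fun j _ => (hcoeff_int i j).smul_const _))]
    have hstep : ∀ i : m, (∫ t in Set.Ioi (0:ℝ), ∑ j,
        (R i j * Real.exp (-((θ j - lam i) * t))) • Matrix.single i j (1:ℝ))
        = ∑ j, (R i j / (θ j - lam i)) • Matrix.single i j (1:ℝ) := by
      intro i
      rw [integral_finset_sum _ (fun j _ => (hcoeff_int i j).smul_const _)]
      refine Finset.sum_congr rfl fun j _ => ?_
      rw [integral_smul_const, MeasureTheory.integral_const_mul,
        my_integral_exp_neg_mul (hb i j), div_eq_mul_inv]
    rw [Finset.sum_congr rfl fun i _ => hstep i]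
    conv_rhs => rw [Matrix.matrix_eq_sum_single
      (Matrix.of fun i j => R i j / (θ j - lam i) : Matrix m n ℝ)]
    refine Finset.sum_congr rfl fun i _ => Finset.sum_congr rfl fun j _ => ?_
    rw [Matrix.smul_single, smul_eq_mul, mul_one, Matrix.of_apply]
  have hFnorm : ∀ t ∈ Set.Ioi (0:ℝ), ‖F t‖ ≤ ‖R‖ * Real.exp (-(γ * t)) := by
    intro t ht
    have ht0 : 0 ≤ t := le_of_lt ht
    have hD1 : ‖Matrix.diagonal (fun i => Real.exp (t * lam i))‖ ≤ Real.exp (t * α) := by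
      apply Matrix.l2_opNorm_diagonal_le _ (Real.exp_pos _).le
      intro i
      rw [Real.norm_eq_abs, abs_of_pos (Real.exp_pos _)]
      exact Real.exp_le_exp.2 (mul_le_mul_of_nonneg_left (hα i) ht0)
    have hD2 : ‖Matrix.diagonal (fun j => Real.exp (-(t * θ j)))‖ ≤ Real.exp (-(t * β)) := by
      apply Matrix.l2_opNorm_diagonal_le _ (Real.exp_pos _).le
      intro j
      rw [Real.norm_eq_abs, abs_of_pos (Real.exp_pos _)]
      exact Real.exp_le_exp.2 (neg_le_neg (mul_le_mul_of_nonneg_left (hβ j) ht0))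
    calc ‖F t‖ ≤ ‖Matrix.diagonal (fun i => Real.exp (t * lam i)) * R‖ *
          ‖Matrix.diagonal (fun j => Real.exp (-(t * θ j)))‖ := Matrix.l2_opNorm_mul _ _
      _ ≤ (‖Matrix.diagonal (fun i => Real.exp (t * lam i))‖ * ‖R‖) *
          ‖Matrix.diagonal (fun j => Real.exp (-(t * θ j)))‖ :=
          mul_le_mul_of_nonneg_right (Matrix.l2_opNorm_mul _ _) (norm_nonneg _)
      _ ≤ (Real.exp (t * α) * ‖R‖) * Real.exp (-(t * β)) := by
          apply mul_le_mul (mul_le_mul_of_nonneg_right hD1 (norm_nonneg _)) hD2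
            (norm_nonneg _) (by positivity)
      _ = ‖R‖ * Real.exp (-(γ * t)) := by
          rw [mul_comm (Real.exp (t * α)), mul_assoc, ← Real.exp_add]
          congr 2
          rw [hγ]; ring
  have hnormle : ‖∫ t in Set.Ioi (0:ℝ), F t‖ ≤ ∫ t in Set.Ioi (0:ℝ), ‖R‖ * Real.exp (-(γ * t)) := by
    apply MeasureTheory.norm_integral_le_of_norm_le
    · have h2 : (fun t => ‖R‖ * Real.exp (-(γ * t))) = fun t => ‖R‖ * Real.exp (-γ * t) := by
        funext t; rw [neg_mul]
      rw [h2]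
      exact (exp_neg_integrableOn_Ioi 0 hγpos).const_mul _
    · exact (ae_restrict_iff' measurableSet_Ioi).2 (ae_of_all _ hFnorm)
  rw [hYint] at hnormle
  calc ‖(Matrix.of fun i j => R i j / (θ j - lam i) : Matrix m n ℝ)‖
      ≤ ∫ t in Set.Ioi (0:ℝ), ‖R‖ * Real.exp (-(γ * t)) := hnormle
    _ = ‖R‖ * γ⁻¹ := by rw [MeasureTheory.integral_const_mul, my_integral_exp_neg_mul hγpos]
    _ = ‖R‖ / γ := (div_eq_mul_inv _ _).symm

end Helpers

/-- abstract form of Theorem 4.4: if `M_X = V·[[Λ,R],[0,Θ]]·V⁻¹` with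
`Λ, Θ` diagonal and the separation `γ = min Θ − max Λ` is positive, then `M_X` is
diagonalizable over `ℝ` and for any `Mᵉ` and complex eigenvalue `μ` of `Mᵉ`,
`dist(μ, σ(M_X)) ≤ (1 + ‖R‖/γ)²·‖V‖·‖V⁻¹‖·‖M_X − Mᵉ‖`. -/
theorem stmt12 {N M : ℕ} (hM : 0 < M) (hMN : M < N)
    (MX V : Matrix (Fin N) (Fin N) ℝ) (hV : IsUnit V)
    (lam : Fin M → ℝ) (θ : Fin (N - M) → ℝ)
    (R : Matrix (Fin M) (Fin (N - M)) ℝ)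
    (hfact : MX =
      V *
      (Matrix.reindex (finSumFinEquiv.trans (finCongr (Nat.add_sub_cancel' hMN.le)))
          (finSumFinEquiv.trans (finCongr (Nat.add_sub_cancel' hMN.le)))
          (Matrix.fromBlocks (Matrix.diagonal lam) R 0 (Matrix.diagonal θ))) *
      V⁻¹)
    (γ : ℝ)
    (hγ : γ = Finset.univ.inf' ⟨⟨0, Nat.sub_pos_of_lt hMN⟩, Finset.mem_univ _⟩ θ -
        Finset.univ.sup' ⟨⟨0, hM⟩, Finset.mem_univ _⟩ lam)
    (hγpos : 0 < γ) :
    (∃ (U : Matrix (Fin N) (Fin N) ℝ) (d : Fin N → ℝ),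
      IsUnit U ∧ MX = U * Matrix.diagonal d * U⁻¹) ∧
    ∀ (Mε : Matrix (Fin N) (Fin N) ℝ) (μ : ℂ), μ ∈ specC Mε →
      ∃ lam₀ ∈ specC MX,
        ‖μ - lam₀‖ ≤
          (1 + ‖R‖ / γ) ^ 2 * ‖V‖ * ‖V⁻¹‖ * ‖MX - Mε‖ := by
  classical
  set e : Fin M ⊕ Fin (N - M) ≃ Fin N :=
    finSumFinEquiv.trans (finCongr (Nat.add_sub_cancel' hMN.le)) with he
  set α : ℝ := Finset.univ.sup' ⟨⟨0, hM⟩, Finset.mem_univ _⟩ lam with hα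
  set β : ℝ := Finset.univ.inf' ⟨⟨0, Nat.sub_pos_of_lt hMN⟩, Finset.mem_univ _⟩ θ with hβ
  have hlamle : ∀ i, lam i ≤ α := fun i => Finset.le_sup' lam (Finset.mem_univ i)
  have hθge : ∀ j, β ≤ θ j := fun j => Finset.inf'_le θ (Finset.mem_univ j)
  have hγ' : γ = β - α := hγ
  have hb : ∀ (i : Fin M) (j : Fin (N - M)), 0 < θ j - lam i := fun i j => by
    have := hlamle i; have := hθge j; linarith
  set Y : Matrix (Fin M) (Fin (N - M)) ℝ := Matrix.of fun i j => R i j / (θ j - lam i) with hY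
  have hYR : Y * Matrix.diagonal θ - Matrix.diagonal lam * Y = R := by
    ext i j
    rw [Matrix.sub_apply, Matrix.mul_diagonal, Matrix.diagonal_mul]
    have hYij : Y i j = R i j / (θ j - lam i) := rfl
    rw [hYij]
    field_simp [(hb i j).ne']
  set W : Matrix (Fin M ⊕ Fin (N - M)) (Fin M ⊕ Fin (N - M)) ℝ :=
    Matrix.fromBlocks 1 Y 0 1 with hW
  set W' : Matrix (Fin M ⊕ Fin (N - M)) (Fin M ⊕ Fin (N - M)) ℝ :=
    Matrix.fromBlocks 1 (-Y) 0 1 with hW'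
  have hWW' : W * W' = 1 := by
    rw [hW, hW', Matrix.fromBlocks_multiply]
    rw [← Matrix.fromBlocks_one]
    congr 1 <;> simp
  have hW'W : W' * W = 1 := by
    rw [hW, hW', Matrix.fromBlocks_multiply]
    rw [← Matrix.fromBlocks_one]
    congr 1 <;> simp
  have hT : Matrix.fromBlocks (Matrix.diagonal lam) R 0 (Matrix.diagonal θ) =
      W * Matrix.diagonal (Sum.elim lam θ) * W' := by
    rw [← Matrix.fromBlocks_diagonal, hW, hW', Matrix.fromBlocks_multiply,
      Matrix.fromBlocks_multiply]
    simp only [Matrix.one_mul, Matrix.mul_one, Matrix.zero_mul, Matrix.mul_zero,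
      add_zero, zero_add, neg_zero, Matrix.mul_neg]
    rw [← hYR, sub_eq_neg_add]
  have hVdet : IsUnit V.det := (Matrix.isUnit_iff_isUnit_det V).1 hV
  have hVV' : V * V⁻¹ = 1 := Matrix.mul_nonsing_inv V hVdet
  have hV'V : V⁻¹ * V = 1 := Matrix.nonsing_inv_mul V hVdet
  set d : Fin N → ℝ := fun k => Sum.elim lam θ (e.symm k) with hd
  set Wr : Matrix (Fin N) (Fin N) ℝ := (Matrix.reindex e e) W with hWr
  set W'r : Matrix (Fin N) (Fin N) ℝ := (Matrix.reindex e e) W' with hW'r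
  have hreidmul : ∀ (A B : Matrix (Fin M ⊕ Fin (N - M)) (Fin M ⊕ Fin (N - M)) ℝ),
      (Matrix.reindex e e) A * (Matrix.reindex e e) B = (Matrix.reindex e e) (A * B) := by
    intro A B
    simp only [Matrix.reindex_apply]
    exact Matrix.submatrix_mul_equiv A B _ _ _
  have hreidone : (Matrix.reindex e e) (1 : Matrix (Fin M ⊕ Fin (N - M)) _ ℝ) = 1 := by
    simp only [Matrix.reindex_apply]
    exact Matrix.submatrix_one_equiv e.symm
  have hWrW'r : Wr * W'r = 1 := by rw [hWr, hW'r, hreidmul, hWW', hreidone]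
  have hW'rWr : W'r * Wr = 1 := by rw [hWr, hW'r, hreidmul, hW'W, hreidone]
  have hdiagreid : (Matrix.reindex e e) (Matrix.diagonal (Sum.elim lam θ)) = Matrix.diagonal d := by
    simp only [Matrix.reindex_apply]
    rw [Matrix.submatrix_diagonal _ _ e.symm.injective]
    rfl
  set U : Matrix (Fin N) (Fin N) ℝ := V * Wr with hU
  set U' : Matrix (Fin N) (Fin N) ℝ := W'r * V⁻¹ with hU'
  have hUU' : U * U' = 1 := by
    rw [hU, hU']
    calc V * Wr * (W'r * V⁻¹) = V * (Wr * W'r) * V⁻¹ := by simp only [Matrix.mul_assoc]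
      _ = 1 := by rw [hWrW'r, Matrix.mul_one, hVV']
  have hU'U : U' * U = 1 := by
    rw [hU, hU']
    calc W'r * V⁻¹ * (V * Wr) = W'r * (V⁻¹ * V) * Wr := by simp only [Matrix.mul_assoc]
      _ = 1 := by rw [hV'V, Matrix.mul_one, hW'rWr]
  have hMXU : MX = U * Matrix.diagonal d * U' := by
    rw [hfact, hT, ← hreidmul, ← hreidmul, hdiagreid, hU, hU', ← hWr, ← hW'r]
    simp only [Matrix.mul_assoc]
  have hUunit : IsUnit U := (Matrix.isUnit_iff_isUnit_det U).2
    (Matrix.isUnit_det_of_right_inverse hUU')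
  have hUinv : U⁻¹ = U' := Matrix.inv_eq_right_inv hUU'
  constructor
  · exact ⟨U, d, hUunit, by rw [hUinv]; exact hMXU⟩
  -- Part 2
  intro Mε μ hμ
  have hNpos : 0 < N := lt_trans hM hMN
  have : Nonempty (Fin N) := ⟨⟨0, hNpos⟩⟩
  set c := algebraMap ℝ ℂ with hc
  set Uc := U.map c with hUc
  set U'c := U'.map c with hU'c
  set dc : Fin N → ℂ := fun i => (d i : ℂ) with hdc
  have hmapmul : ∀ (A B : Matrix (Fin N) (Fin N) ℝ), (A * B).map c = A.map c * B.map c := by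
    intro A B
    exact Matrix.map_mul
  have hmapone : (1 : Matrix (Fin N) (Fin N) ℝ).map c = 1 :=
    Matrix.map_one _ (map_zero c) (map_one c)
  have hUcU'c : Uc * U'c = 1 := by rw [hUc, hU'c, ← hmapmul, hUU', hmapone]
  have hU'cUc : U'c * Uc = 1 := by rw [hUc, hU'c, ← hmapmul, hU'U, hmapone]
  have hdiagmap : (Matrix.diagonal d).map c = Matrix.diagonal dc := by
    rw [Matrix.diagonal_map (map_zero c)]
    rfl
  have hMXc : MX.map c = Uc * Matrix.diagonal dc * U'c := by
    rw [hMXU, hmapmul, hmapmul, hdiagmap]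
  obtain ⟨i, hi⟩ := my_bauer_fike (MX.map c) (Mε.map c) Uc U'c dc hUcU'c hU'cUc hMXc μ hμ
  refine ⟨dc i, ?_, ?_⟩
  · show dc i ∈ ((MX.map c).charpoly).roots
    rw [hMXc, my_charpoly_conj Uc (Matrix.diagonal dc) U'c hUcU'c,
      my_roots_charpoly_diagonal]
    exact Multiset.mem_map.2 ⟨i, Finset.mem_univ_val i, rfl⟩
  -- norm bounds
  have hr0 : 0 ≤ ‖R‖ / γ := div_nonneg (norm_nonneg _) hγpos.le
  have hYnorm : ‖Y‖ ≤ ‖R‖ / γ :=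
    my_norm_Y_le R lam θ γ α β hγpos hlamle hθge hγ'
  have hWsplit : W = 1 + Matrix.fromBlocks 0 Y 0 0 := by
    rw [hW, ← Matrix.fromBlocks_one, Matrix.fromBlocks_add]
    simp
  have hW'split : W' = 1 + Matrix.fromBlocks 0 (-Y) 0 0 := by
    rw [hW', ← Matrix.fromBlocks_one, Matrix.fromBlocks_add]
    simp
  have hWn : ‖W‖ ≤ 1 + ‖R‖ / γ := by
    rw [hWsplit]
    calc ‖(1 : Matrix (Fin M ⊕ Fin (N - M)) _ ℝ) + Matrix.fromBlocks 0 Y 0 0‖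
        ≤ ‖(1 : Matrix (Fin M ⊕ Fin (N - M)) _ ℝ)‖ + ‖Matrix.fromBlocks 0 Y 0 0‖ := norm_add_le _ _
      _ ≤ 1 + ‖Y‖ := add_le_add Matrix.l2_opNorm_one_le (Matrix.l2_opNorm_fromBlocks_offdiag_le Y)
      _ ≤ 1 + ‖R‖ / γ := by linarith
  have hW'n : ‖W'‖ ≤ 1 + ‖R‖ / γ := by
    rw [hW'split]
    calc ‖(1 : Matrix (Fin M ⊕ Fin (N - M)) _ ℝ) + Matrix.fromBlocks 0 (-Y) 0 0‖
        ≤ ‖(1 : Matrix (Fin M ⊕ Fin (N - M)) _ ℝ)‖ + ‖Matrix.fromBlocks 0 (-Y) 0 0‖ :=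
          norm_add_le _ _
      _ ≤ 1 + ‖-Y‖ :=
          add_le_add Matrix.l2_opNorm_one_le (Matrix.l2_opNorm_fromBlocks_offdiag_le (-Y))
      _ = 1 + ‖Y‖ := by rw [norm_neg]
      _ ≤ 1 + ‖R‖ / γ := by linarith
  have hWrn : ‖Wr‖ ≤ 1 + ‖R‖ / γ := by
    rw [hWr, Matrix.reindex_apply]
    exact le_trans (Matrix.l2_opNorm_submatrix_le W e.symm e.symm) hWn
  have hW'rn : ‖W'r‖ ≤ 1 + ‖R‖ / γ := by
    rw [hW'r, Matrix.reindex_apply]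
    exact le_trans (Matrix.l2_opNorm_submatrix_le W' e.symm e.symm) hW'n
  have hUn : ‖U‖ ≤ ‖V‖ * (1 + ‖R‖ / γ) := by
    rw [hU]
    exact le_trans (Matrix.l2_opNorm_mul V Wr)
      (mul_le_mul_of_nonneg_left hWrn (norm_nonneg V))
  have hU'n : ‖U'‖ ≤ (1 + ‖R‖ / γ) * ‖V⁻¹‖ := by
    rw [hU']
    exact le_trans (Matrix.l2_opNorm_mul W'r V⁻¹)
      (mul_le_mul_of_nonneg_right hW'rn (norm_nonneg V⁻¹))
  have hUcn : ‖Uc‖ ≤ ‖V‖ * (1 + ‖R‖ / γ) :=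
    le_trans (Matrix.l2_opNorm_map_complex_le U) hUn
  have hU'cn : ‖U'c‖ ≤ (1 + ‖R‖ / γ) * ‖V⁻¹‖ :=
    le_trans (Matrix.l2_opNorm_map_complex_le U') hU'n
  have hsubmap : MX.map c - Mε.map c = (MX - Mε).map c := by
    ext i' j'
    simp [Matrix.map_apply, Matrix.sub_apply]
  have hΔ : ‖MX.map c - Mε.map c‖ ≤ ‖MX - Mε‖ := by
    rw [hsubmap]
    exact Matrix.l2_opNorm_map_complex_le _
  refine le_trans hi ?_
  have hfinal : ‖Uc‖ * ‖U'c‖ * ‖MX.map c - Mε.map c‖ ≤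
      (‖V‖ * (1 + ‖R‖ / γ)) * ((1 + ‖R‖ / γ) * ‖V⁻¹‖) * ‖MX - Mε‖ := by
    apply mul_le_mul
    · apply mul_le_mul hUcn hU'cn (norm_nonneg _) (by positivity)
    · exact hΔ
    · exact norm_nonneg _
    · positivity
  refine le_trans hfinal (le_of_eq ?_)
  ring
end

section
/- (Energy stability, conditionally positive definite case.) Let A, K be N×N real symmetric matrices, P an N×M real matrix with A·P = 0, Λ an M×M real matrix, B an M×N real matrix, and set M_X = K·A + P·Λ·B. Then M_Xᵀ·A + A·M_X = 2·A·K·A. Consequently, if in addition K is negative semidefinite and u : ℝ → ℝᴺ is differentiable with u′(t) = M_X·u(t) for all t, then the function t ↦ u(t)ᵀ·A·u(t) is nonincreasing. -/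
open Matrix

lemma dot_deriv {N : ℕ} (A : Matrix (Fin N) (Fin N) ℝ) (u : ℝ → (Fin N → ℝ))
    (v : Fin N → ℝ) (t : ℝ) (hu : HasDerivAt u v t) :
    HasDerivAt (fun t => u t ⬝ᵥ (A *ᵥ u t))
      (v ⬝ᵥ (A *ᵥ u t) + u t ⬝ᵥ (A *ᵥ v)) t := by
  have h : ∀ i, HasDerivAt (fun s => u s i) (v i) t := fun i => hasDerivAt_pi.1 hu i
  have : HasDerivAt (fun s => ∑ i, ∑ j, u s i * (A i j * u s j))
      (∑ i, ∑ j, (v i * (A i j * u t j) + u t i * (A i j * v j))) t := by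
    apply HasDerivAt.fun_sum
    intro i _
    apply HasDerivAt.fun_sum
    intro j _
    simpa [mul_assoc] using (h i).fun_mul ((hasDerivAt_const t (A i j)).fun_mul (h j))
  convert this using 1
  · ext s
    simp [dotProduct, mulVec, Finset.mul_sum]
  · simp [dotProduct, mulVec, Finset.mul_sum, Finset.sum_add_distrib, mul_add, add_mul]

lemma dot_lin {N : ℕ} (MX A : Matrix (Fin N) (Fin N) ℝ) (x : Fin N → ℝ) :
    (MX *ᵥ x) ⬝ᵥ (A *ᵥ x) + x ⬝ᵥ (A *ᵥ (MX *ᵥ x))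
      = x ⬝ᵥ ((MXᵀ * A + A * MX) *ᵥ x) := by
  rw [Matrix.add_mulVec, dotProduct_add, ← Matrix.mulVec_mulVec, ← Matrix.mulVec_mulVec,
    Matrix.dotProduct_mulVec x MXᵀ, Matrix.vecMul_transpose]

/-- energy stability, conditionally positive definite case: with `A, K`
symmetric, `A·P = 0`, and `M_X = K·A + P·Λ·B`, one has `M_Xᵀ·A + A·M_X = 2·A·K·A`;
consequently if `K` is negative semidefinite and `u′(t) = M_X·u(t)`, then
`t ↦ u(t)ᵀ·A·u(t)` is nonincreasing. -/
theorem stmt15 {N M : ℕ} (A K : Matrix (Fin N) (Fin N) ℝ)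
    (hA : A.IsHermitian) (hK : K.IsHermitian)
    (P : Matrix (Fin N) (Fin M) ℝ) (hAP : A * P = 0)
    (Λ : Matrix (Fin M) (Fin M) ℝ) (B : Matrix (Fin M) (Fin N) ℝ) :
    (K * A + P * Λ * B)ᵀ * A + A * (K * A + P * Λ * B) = (2 : ℝ) • (A * K * A) ∧
    ((∀ x : Fin N → ℝ, x ⬝ᵥ (K *ᵥ x) ≤ 0) →
      ∀ u : ℝ → (Fin N → ℝ),
        (∀ t : ℝ, HasDerivAt u ((K * A + P * Λ * B) *ᵥ u t) t) →
        Antitone (fun t => u t ⬝ᵥ (A *ᵥ u t))) := by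
  have hAsym : Aᵀ = A := hA
  have hKsym : Kᵀ = K := hK
  have hPA : Pᵀ * A = 0 := by
    have := congrArg Matrix.transpose hAP
    simpa [Matrix.transpose_mul, hAsym] using this
  have key : (K * A + P * Λ * B)ᵀ * A + A * (K * A + P * Λ * B) = (2 : ℝ) • (A * K * A) := by
    have h1 : (K * A)ᵀ * A = A * K * A := by
      rw [Matrix.transpose_mul, hAsym, hKsym, Matrix.mul_assoc]
    have h2 : (P * Λ * B)ᵀ * A = 0 := by
      rw [Matrix.transpose_mul, Matrix.transpose_mul]
      rw [Matrix.mul_assoc, Matrix.mul_assoc, hPA]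
      simp
    have h3 : A * (P * Λ * B) = 0 := by
      rw [← Matrix.mul_assoc, ← Matrix.mul_assoc, hAP]
      simp
    rw [Matrix.transpose_add, Matrix.add_mul, Matrix.mul_add, h1, h2, h3, two_smul ℝ, ← Matrix.mul_assoc]
    abel
  refine ⟨key, fun hKneg u hu => ?_⟩
  set MX := K * A + P * Λ * B with hMX
  have hderiv : ∀ t, HasDerivAt (fun t => u t ⬝ᵥ (A *ᵥ u t))
      ((MX *ᵥ u t) ⬝ᵥ (A *ᵥ u t) + u t ⬝ᵥ (A *ᵥ (MX *ᵥ u t))) t :=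
    fun t => dot_deriv A u _ t (hu t)
  apply antitone_of_deriv_nonpos
  · exact fun t => (hderiv t).differentiableAt
  · intro t
    rw [(hderiv t).deriv]
    have e1 := dot_lin MX A (u t)
    rw [e1, key, Matrix.smul_mulVec, dotProduct_smul]
    have e2 : u t ⬝ᵥ ((A * K * A) *ᵥ u t) = (A *ᵥ u t) ⬝ᵥ (K *ᵥ (A *ᵥ u t)) := by
      rw [← Matrix.mulVec_mulVec, ← Matrix.mulVec_mulVec,
        Matrix.dotProduct_mulVec (u t) A, ← hAsym, Matrix.vecMul_transpose, hAsym]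
    rw [e2, smul_eq_mul]
    linarith [hKneg (A *ᵥ u t)]
end
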